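/- Let n ≥ 1 and let λ be a special orthogonal partition of 2n. Then λ + ζ(λ) is a partition of 2n, its transpose ^t(λ + ζ(λ)) is an orthogonal partition of 2n satisfying ^t(λ + ζ(λ)) ≤ ^tλ in the dominance order, and every orthogonal partition μ of 2n with μ ≤ ^tλ satisfies μ ≤ ^t(λ + ζ(λ)); that is, ^t(λ + ζ(λ)) is the greatest orthogonal partition of 2n dominated by ^tλ. (This is Lemma 1.7 of the paper, combined with the characterization of the duality d given there.) -/

import Mathlib

open Classical

namespace Wald

/-- `S f k = λ_1 + … + λ_k` (partitions are indexed from 1; index 0 is unused). -/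
def S (f : ℕ → ℕ) (k : ℕ) : ℕ := ∑ j ∈ Finset.Icc 1 k, f j

/-- `f` represents a partition of `N`: nonincreasing on indices `≥ 1`,
finitely many nonzero terms, with total sum `N`. -/
structure IsPartition (f : ℕ → ℕ) (N : ℕ) : Prop where
  mono : ∀ ⦃j k : ℕ⦄, 1 ≤ j → j ≤ k → f k ≤ f j
  fin : ∃ m, ∀ j, m < j → f j = 0
  total : ∀ m, (∀ j, m < j → f j = 0) → S f m = N

/-- multiplicity of `i` as a term of the partition -/
noncomputable def mult (f : ℕ → ℕ) (i : ℕ) : ℕ := Set.ncard {j : ℕ | 1 ≤ j ∧ f j = i}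

/-- dominance order: `Dom f g ↔ f ≤ g` -/
def Dom (f g : ℕ → ℕ) : Prop := ∀ k, S f k ≤ S g k

/-- transposed partition: `(transpose f) j = #{i ≥ 1 : f i ≥ j}` for `j ≥ 1` -/
noncomputable def transpose (f : ℕ → ℕ) : ℕ → ℕ :=
  fun j => Set.ncard {i : ℕ | 1 ≤ i ∧ 1 ≤ j ∧ j ≤ f i}

/-- union of two partitions (all terms listed together in nonincreasing order);
it is characterized by `transpose (unionP f g) = transpose f + transpose g`. -/
noncomputable def unionP (f g : ℕ → ℕ) : ℕ → ℕ :=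
  transpose (fun j => transpose f j + transpose g j)

/-- the partition `(1)` -/
def one1 : ℕ → ℕ := fun j => if j = 1 then 1 else 0

/-- symplectic partition: every odd `i ≥ 1` has even multiplicity -/
def Symp (f : ℕ → ℕ) : Prop := ∀ i, Odd i → Even (mult f i)

/-- orthogonal partition: every even `i ≥ 2` has even multiplicity -/
def Orth (f : ℕ → ℕ) : Prop := ∀ i, Even i → 1 ≤ i → Even (mult f i)

/-- `λ_{2j-1} ≡ λ_{2j} (mod 2)` for all `j ≥ 1` (speciality for symplectic
partitions of `2n` and orthogonal partitions of `2n`). -/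
def SpecialPairs (f : ℕ → ℕ) : Prop := ∀ j, 1 ≤ j → f (2*j - 1) % 2 = f (2*j) % 2

/-- speciality for orthogonal partitions of `2n+1`: `λ_1` odd and
`λ_{2j} ≡ λ_{2j+1} (mod 2)` for all `j ≥ 1`. -/
def SpecialOrthOdd (f : ℕ → ℕ) : Prop :=
  Odd (f 1) ∧ ∀ j, 1 ≤ j → f (2*j) % 2 = f (2*j + 1) % 2

/-- `Jord_bp` for symplectic partitions: even `i ≥ 2` with positive multiplicity -/
def JordbpS (f : ℕ → ℕ) : Set ℕ := {i | Even i ∧ 2 ≤ i ∧ 1 ≤ mult f i}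

/-- `Jord_bp` for orthogonal partitions: odd `i ≥ 1` with positive multiplicity -/
def JordbpO (f : ℕ → ℕ) : Set ℕ := {i | Odd i ∧ 1 ≤ mult f i}

/-- the set `{i_1 > … > i_m}` of terms with odd multiplicity -/
def OddSet (f : ℕ → ℕ) : Set ℕ := {i | Odd (mult f i)}

/-- for special symplectic partitions: `{i_1 > … > i_{m'}}`, with `0` added if `m` is odd -/
def Dsymp (f : ℕ → ℕ) : Set ℕ :=
  {i | Odd (mult f i) ∨ (i = 0 ∧ Odd (OddSet f).ncard)}

/-- `a = i_{2h-1}` and `b = i_{2h}` for some `h`: consecutive elements of `Dsymp f`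
with an even number of elements of `Dsymp f` above `a`. -/
def PairedS (f : ℕ → ℕ) (a b : ℕ) : Prop :=
  b < a ∧ a ∈ Dsymp f ∧ b ∈ Dsymp f ∧ Even ((Dsymp f ∩ Set.Ioi a).ncard) ∧
    Dsymp f ∩ Set.Ioo b a = ∅

/-- intervals of a special symplectic partition of `2n` -/
def IsIntervalS (f : ℕ → ℕ) (Δ : Set ℕ) : Prop :=
  (∃ a b, PairedS f a b ∧ Δ = {i | (i = 0 ∨ 1 ≤ mult f i) ∧ b ≤ i ∧ i ≤ a}) ∨
  (∃ i, Even i ∧ (i = 0 ∨ (2 ≤ i ∧ 1 ≤ mult f i)) ∧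
    (¬ ∃ a b, PairedS f a b ∧ b ≤ i ∧ i ≤ a) ∧ Δ = {i})

/-- `a = i_{2h-1}` and `b = i_{2h}` for some `h` (orthogonal partitions of `2n`) -/
def PairedOE (f : ℕ → ℕ) (a b : ℕ) : Prop :=
  b < a ∧ a ∈ OddSet f ∧ b ∈ OddSet f ∧ Even ((OddSet f ∩ Set.Ioi a).ncard) ∧
    OddSet f ∩ Set.Ioo b a = ∅

/-- intervals of a special orthogonal partition of `2n` -/
def IsIntervalOE (f : ℕ → ℕ) (Δ : Set ℕ) : Prop :=
  (∃ a b, PairedOE f a b ∧ Δ = {i | 1 ≤ mult f i ∧ b ≤ i ∧ i ≤ a}) ∨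
  (∃ i, Odd i ∧ 1 ≤ mult f i ∧ (¬ ∃ a b, PairedOE f a b ∧ b ≤ i ∧ i ≤ a) ∧ Δ = {i})

/-- `a = i_{2h}` and `b = i_{2h+1}` for some `h ≥ 1` (orthogonal partitions of `2n+1`) -/
def PairedOO (f : ℕ → ℕ) (a b : ℕ) : Prop :=
  b < a ∧ a ∈ OddSet f ∧ b ∈ OddSet f ∧ Odd ((OddSet f ∩ Set.Ioi a).ncard) ∧
    OddSet f ∩ Set.Ioo b a = ∅

/-- intervals of a special orthogonal partition of `2n+1` (convention `i_0 = ∞`) -/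
def IsIntervalOO (f : ℕ → ℕ) (Δ : Set ℕ) : Prop :=
  (∃ b, b ∈ OddSet f ∧ OddSet f ∩ Set.Ioi b = ∅ ∧ Δ = {i | 1 ≤ mult f i ∧ b ≤ i}) ∨
  (∃ a b, PairedOO f a b ∧ Δ = {i | 1 ≤ mult f i ∧ b ≤ i ∧ i ≤ a}) ∨
  (∃ i, Odd i ∧ 1 ≤ mult f i ∧
    (¬ ((∃ b, b ∈ OddSet f ∧ OddSet f ∩ Set.Ioi b = ∅ ∧ b ≤ i) ∨
        (∃ a b, PairedOO f a b ∧ b ≤ i ∧ i ≤ a))) ∧ Δ = {i})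

/-- `J(Δ) = {j ≥ 1 : λ_j ∈ Δ}` -/
def Jset (f : ℕ → ℕ) (Δ : Set ℕ) : Set ℕ := {j | 1 ≤ j ∧ f j ∈ Δ}

/-- `ζ(λ)` for a special symplectic partition (`j_max(Δ_min) = ∞`, so the smallest
interval contributes no `-1`: its `J`-set has no greatest element). -/
noncomputable def zetaS (f : ℕ → ℕ) : ℕ → ℤ := fun j =>
  if ∃ Δ, IsIntervalS f Δ ∧ IsLeast (Jset f Δ) j then 1
  else if ∃ Δ, IsIntervalS f Δ ∧ IsGreatest (Jset f Δ) j then -1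
  else 0

/-- `ζ(λ)` for a special orthogonal partition of `2n` -/
noncomputable def zetaOE (f : ℕ → ℕ) : ℕ → ℤ := fun j =>
  if ∃ Δ, IsIntervalOE f Δ ∧ IsLeast (Jset f Δ) j then 1
  else if ∃ Δ, IsIntervalOE f Δ ∧ IsGreatest (Jset f Δ) j then -1
  else 0

/-- `J^+` for `λ1` special symplectic and `λ2` special orthogonal (of `2n2`) -/
def JplusSet (f1 f2 : ℕ → ℕ) : Set ℕ :=
  {j | 1 ≤ j ∧ Even (f1 j) ∧ Odd (f2 j) ∧
    ((∃ Δ, IsIntervalS f1 Δ ∧ IsLeast (Jset f1 Δ) j) ∨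
     (∃ Δ, IsIntervalOE f2 Δ ∧ IsLeast (Jset f2 Δ) j))}

/-- `J^-` -/
def JminusSet (f1 f2 : ℕ → ℕ) : Set ℕ :=
  {j | 1 ≤ j ∧ Even (f1 j) ∧ Odd (f2 j) ∧
    ((∃ Δ, IsIntervalS f1 Δ ∧ IsGreatest (Jset f1 Δ) j) ∨
     (∃ Δ, IsIntervalOE f2 Δ ∧ IsGreatest (Jset f2 Δ) j))}

/-- the sequence `ξ` -/
noncomputable def xi (f1 f2 : ℕ → ℕ) : ℕ → ℤ := fun j =>
  if j ∈ JplusSet f1 f2 then 1 else if j ∈ JminusSet f1 f2 then -1 else 0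

/-- partial sums of an integer-valued sequence indexed from 1 -/
def Sz (f : ℕ → ℤ) (k : ℕ) : ℤ := ∑ j ∈ Finset.Icc 1 k, f j

/-- `g` is the greatest orthogonal partition of `N` which is dominated by the
sequence `t` (used to define the Spaltenstein-type duality `d`). -/
def IsDualOf (g : ℕ → ℕ) (N : ℕ) (t : ℕ → ℕ) : Prop :=
  (IsPartition g N ∧ Orth g ∧ Dom g t) ∧
  ∀ ν, IsPartition ν N → Orth ν → Dom ν t → Dom ν g

/-- `g = d(f)` for `f` a symplectic partition of `2m`: the greatest orthogonal
partition of `2m+1` dominated by `^t(f ∪ (1))`. -/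
def IsSympDual (g : ℕ → ℕ) (m : ℕ) (f : ℕ → ℕ) : Prop :=
  IsDualOf g (2*m+1) (transpose (unionP f one1))

/-- `g = d(f)` for `f` an orthogonal partition of `2m`: the greatest orthogonal
partition of `2m` dominated by `^tf`. -/
def IsOrthDual (g : ℕ → ℕ) (m : ℕ) (f : ℕ → ℕ) : Prop :=
  IsDualOf g (2*m) (transpose f)

section AuxDev

open Finset

/-- bundle: `f` is nonincreasing on `[1,∞)`, vanishes beyond `m`, `1 ≤ m`. -/
structure PB (f : ℕ → ℕ) (m : ℕ) : Prop where
  mono : ∀ ⦃j k : ℕ⦄, 1 ≤ j → j ≤ k → f k ≤ f j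
  bnd : ∀ j, m < j → f j = 0
  pos : 1 ≤ m

lemma IsPartition.pb {f : ℕ → ℕ} {N : ℕ} (h : IsPartition f N) : ∃ m, PB f m := by
  obtain ⟨m, hm⟩ := h.fin
  exact ⟨m + 1, h.mono, fun j hj => hm j (by omega), by omega⟩

lemma PB.le_top {f : ℕ → ℕ} {m : ℕ} (h : PB f m) {j : ℕ} (hj : 1 ≤ j) : f j ≤ f 1 :=
  h.mono le_rfl hj

lemma PB.idx_le {f : ℕ → ℕ} {m : ℕ} (h : PB f m) {j : ℕ} (hj : 1 ≤ f j) : j ≤ m := by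
  by_contra hc
  rw [h.bnd j (by omega)] at hj
  omega

lemma S_succ (f : ℕ → ℕ) (k : ℕ) : S f (k + 1) = S f k + f (k + 1) :=
  Finset.sum_Icc_succ_top (by omega) f

lemma S_stable (f : ℕ → ℕ) {a b : ℕ} (hab : a ≤ b) (h0 : ∀ j, a < j → f j = 0) :
    S f b = S f a := by
  induction b, hab using Nat.le_induction with
  | base => rfl
  | succ b hb ih => rw [S_succ, ih, h0 (b + 1) (by omega), Nat.add_zero]

lemma mult_eq_card {f : ℕ → ℕ} {m : ℕ} (h : PB f m) {i : ℕ} (hi : 1 ≤ i) :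
    mult f i = ((Finset.Icc 1 m).filter fun j => f j = i).card := by
  have hs : {j : ℕ | 1 ≤ j ∧ f j = i} = ↑((Finset.Icc 1 m).filter fun j => f j = i) := by
    ext j
    simp only [Set.mem_setOf_eq, Finset.coe_filter, Finset.mem_Icc, Set.mem_setOf_eq]
    constructor
    · rintro ⟨h1, h2⟩
      exact ⟨⟨h1, h.idx_le (by omega)⟩, h2⟩
    · rintro ⟨⟨h1, _⟩, h2⟩
      exact ⟨h1, h2⟩
  rw [mult, hs, Set.ncard_coe_finset]

lemma mult_zero {f : ℕ → ℕ} {m : ℕ} (h : PB f m) : mult f 0 = 0 := by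
  have hinf : {j : ℕ | 1 ≤ j ∧ f j = 0}.Infinite := by
    apply Set.Infinite.mono (s := Set.Ioi m)
    · intro j hj
      simp only [Set.mem_Ioi] at hj
      exact ⟨by omega, h.bnd j hj⟩
    · exact Set.Ioi_infinite m
  exact hinf.ncard

lemma mult_pos {f : ℕ → ℕ} {m : ℕ} (h : PB f m) {j : ℕ} (hj : 1 ≤ j) (hfj : 1 ≤ f j) :
    1 ≤ mult f (f j) := by
  rw [mult_eq_card h hfj]
  have : j ∈ (Finset.Icc 1 m).filter fun r => f r = f j := by
    simp [Finset.mem_Icc, hj, h.idx_le hfj]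
  exact Finset.card_pos.mpr ⟨j, this⟩

lemma exists_idx {f : ℕ → ℕ} {m : ℕ} (h : PB f m) {i : ℕ} (hi1 : 1 ≤ i)
    (hi : 1 ≤ mult f i) : ∃ j, 1 ≤ j ∧ j ≤ m ∧ f j = i := by
  rw [mult_eq_card h hi1] at hi
  obtain ⟨j, hj⟩ := Finset.card_pos.mp hi
  simp only [Finset.mem_filter, Finset.mem_Icc] at hj
  exact ⟨j, hj.1.1, hj.1.2, hj.2⟩

lemma mult_pos_val_le {f : ℕ → ℕ} {m : ℕ} (h : PB f m) {i : ℕ} (hi1 : 1 ≤ i)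
    (hi : 1 ≤ mult f i) : i ≤ f 1 := by
  obtain ⟨j, hj1, _, hj3⟩ := exists_idx h hi1 hi
  rw [← hj3]
  exact h.le_top hj1

/-- the finite set of values with odd multiplicity -/
noncomputable def OSF (f : ℕ → ℕ) : Finset ℕ :=
  (Finset.Icc 1 (f 1)).filter fun i => Odd (mult f i)

lemma mem_OSF {f : ℕ → ℕ} {m : ℕ} (h : PB f m) {i : ℕ} :
    i ∈ OSF f ↔ Odd (mult f i) := by
  constructor
  · intro hi
    exact (Finset.mem_filter.mp hi).2
  · intro hi
    have hpos : 1 ≤ mult f i := by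
      rcases Nat.eq_zero_or_pos (mult f i) with h0 | h1
      · rw [h0] at hi; exact absurd hi (by decide)
      · exact h1
    have hi1 : 1 ≤ i := by
      by_contra hc
      have : i = 0 := by omega
      rw [this, mult_zero h] at hpos
      omega
    exact Finset.mem_filter.mpr ⟨Finset.mem_Icc.mpr ⟨hi1, mult_pos_val_le h hi1 hpos⟩, hi⟩

lemma OddSet_eq {f : ℕ → ℕ} {m : ℕ} (h : PB f m) : OddSet f = ↑(OSF f) := by
  ext i
  simp only [OddSet, Set.mem_setOf_eq, Finset.mem_coe]
  exact (mem_OSF h).symm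

lemma OddSet_ncard {f : ℕ → ℕ} {m : ℕ} (h : PB f m) (p : ℕ → Prop) [DecidablePred p] :
    (OddSet f ∩ {i | p i}).ncard = ((OSF f).filter p).card := by
  rw [OddSet_eq h, ← Set.ncard_coe_finset ((OSF f).filter p)]
  congr 1
  ext i
  simp [Finset.mem_filter]

lemma OSF_odd {f : ℕ → ℕ} {m : ℕ} (h : PB f m) (horth : Orth f) {i : ℕ}
    (hi : i ∈ OSF f) : Odd i := by
  rcases Nat.even_or_odd i with he | ho
  · exfalso
    have h1 : 1 ≤ i := (Finset.mem_Icc.mp (Finset.mem_filter.mp hi).1).1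
    have := horth i he h1
    exact (Nat.not_even_iff_odd.mpr (Finset.mem_filter.mp hi).2) this
  · exact ho

end AuxDev

section AuxDev2

lemma card_filter_eq_sum_mult {f : ℕ → ℕ} {m : ℕ} (h : PB f m) (P : ℕ → Prop)
    [DecidablePred P] (hP : ∀ x, P x → 1 ≤ x) :
    ((Finset.Icc 1 m).filter fun j => P (f j)).card
      = ∑ i ∈ (Finset.Icc 1 (f 1)).filter P, mult f i := by
  set s := (Finset.Icc 1 m).filter fun j => P (f j) with hs
  have hmap : ∀ x ∈ s, f x ∈ (Finset.Icc 1 (f 1)).filter P := by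
    intro x hx
    simp only [hs, Finset.mem_filter, Finset.mem_Icc] at hx
    exact Finset.mem_filter.mpr
      ⟨Finset.mem_Icc.mpr ⟨hP _ hx.2, h.le_top hx.1.1⟩, hx.2⟩
  rw [Finset.card_eq_sum_card_fiberwise hmap]
  apply Finset.sum_congr rfl
  intro i hi
  simp only [Finset.mem_filter, Finset.mem_Icc] at hi
  rw [mult_eq_card h hi.1.1]
  congr 1
  ext j
  simp only [hs, Finset.mem_filter, Finset.mem_Icc]
  constructor
  · rintro ⟨⟨⟨hj1, hj2⟩, _⟩, hfj⟩
    exact ⟨⟨hj1, hj2⟩, hfj⟩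
  · rintro ⟨⟨hj1, hj2⟩, hfj⟩
    refine ⟨⟨⟨hj1, hj2⟩, ?_⟩, hfj⟩
    rw [hfj]; exact hi.2

lemma sum_parity_card (f : ℕ → ℕ) (s : Finset ℕ) :
    (∑ j ∈ s, f j) % 2 = (s.filter fun j => Odd (f j)).card % 2 := by
  rw [Finset.sum_nat_mod]
  have h1 : ∀ j ∈ s, f j % 2 = if Odd (f j) then 1 else 0 := by
    intro j _
    rcases Nat.even_or_odd (f j) with he | ho
    · simp [Nat.even_iff.mp he, Nat.not_odd_iff_even.mpr he]
    · simp [Nat.odd_iff.mp ho, ho]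
  rw [Finset.sum_congr rfl h1, Finset.sum_boole]
  simp

lemma sum_mult_parity {f : ℕ → ℕ} {m : ℕ} (h : PB f m) (P : ℕ → Prop) [DecidablePred P] :
    (∑ i ∈ (Finset.Icc 1 (f 1)).filter P, mult f i) % 2
      = ((OSF f).filter P).card % 2 := by
  rw [sum_parity_card]
  congr 2
  rw [OSF, Finset.filter_filter, Finset.filter_filter]
  ext i
  simp only [Finset.mem_filter, Finset.mem_Icc]
  tauto

lemma Ncard_parity {f : ℕ → ℕ} {m : ℕ} (h : PB f m) {v : ℕ} (hv : 1 ≤ v) :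
    ((Finset.Icc 1 m).filter fun j => v ≤ f j).card % 2
      = ((OSF f).filter fun i => v ≤ i).card % 2 := by
  rw [card_filter_eq_sum_mult h (fun i => v ≤ i) (fun x hx => by omega),
    sum_mult_parity h]

lemma card_odd_gt_parity {f : ℕ → ℕ} {m : ℕ} (h : PB f m) (horth : Orth f) (w : ℕ) :
    ((Finset.Icc 1 m).filter fun j => Odd (f j) ∧ w < f j).card % 2
      = ((OSF f).filter fun i => w < i).card % 2 := by
  rw [card_filter_eq_sum_mult h (fun i => Odd i ∧ w < i)
    (fun x hx => by rcases hx.1 with ⟨t, ht⟩; omega), sum_mult_parity h]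
  congr 2
  ext i
  simp only [Finset.mem_filter]
  constructor
  · rintro ⟨a, _, b⟩; exact ⟨a, b⟩
  · rintro ⟨a, b⟩; exact ⟨a, OSF_odd h horth a, b⟩

lemma card_odd_all_parity {f : ℕ → ℕ} {m : ℕ} (h : PB f m) (horth : Orth f) :
    ((Finset.Icc 1 m).filter fun j => Odd (f j)).card % 2 = (OSF f).card % 2 := by
  have h1 : ((Finset.Icc 1 m).filter fun j => Odd (f j))
      = (Finset.Icc 1 m).filter fun j => Odd (f j) ∧ 0 < f j := by
    ext j
    simp only [Finset.mem_filter]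
    constructor
    · rintro ⟨a, b⟩
      exact ⟨a, b, by rcases b with ⟨t, ht⟩; omega⟩
    · rintro ⟨a, b, _⟩; exact ⟨a, b⟩
  rw [h1]
  rw [card_odd_gt_parity h horth 0]
  congr 2
  ext i
  simp only [Finset.mem_filter]
  constructor
  · rintro ⟨a, _⟩; exact a
  · intro a
    rcases OSF_odd h horth a with ⟨t, ht⟩
    exact ⟨a, by omega⟩

lemma sum_Ioc_bot (c : ℕ → ℕ) {a b : ℕ} (hab : a < b) :
    ∑ j ∈ Finset.Ioc a b, c j = c (a + 1) + ∑ j ∈ Finset.Ioc (a + 1) b, c j := by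
  rw [← Finset.sum_Ioc_consecutive c (by omega : a ≤ a + 1) (by omega : a + 1 ≤ b)]
  congr 1
  have : Finset.Ioc a (a + 1) = {a + 1} := by
    ext j
    simp only [Finset.mem_Ioc, Finset.mem_singleton]
    omega
  rw [this, Finset.sum_singleton]

lemma S_split (f : ℕ → ℕ) {a b : ℕ} (hab : a ≤ b) :
    S f b = S f a + ∑ j ∈ Finset.Ioc a b, f j := by
  have hset : ∀ k : ℕ, Finset.Icc 1 k = Finset.Ioc 0 k := by
    intro k
    ext j
    simp only [Finset.mem_Icc, Finset.mem_Ioc]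
    omega
  have h1 : ∀ k, S f k = ∑ j ∈ Finset.Ioc 0 k, f j := by
    intro k
    rw [S, hset k]
  rw [h1, h1, ← Finset.sum_Ioc_consecutive f (Nat.zero_le a) hab]

lemma pairs_sum_even (c : ℕ → ℕ) (hp : ∀ t, 1 ≤ t → c (2 * t - 1) % 2 = c (2 * t) % 2)
    {u v : ℕ} (huv : u ≤ v) : (∑ j ∈ Finset.Ioc (2 * u) (2 * v), c j) % 2 = 0 := by
  induction v, huv using Nat.le_induction with
  | base => simp
  | succ v hv ih =>
      have h1 : 2 * (v + 1) = (2 * v + 1) + 1 := by ring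
      rw [h1, Finset.sum_Ioc_succ_top (by omega), Finset.sum_Ioc_succ_top (by omega)]
      have h4 := hp (v + 1) (by omega)
      have h2 : 2 * (v + 1) - 1 = 2 * v + 1 := by omega
      have h3 : 2 * (v + 1) = 2 * v + 1 + 1 := by omega
      rw [h2, h3] at h4
      omega

lemma pairs_sum_even' (c : ℕ → ℕ) (hp : ∀ t, 1 ≤ t → c (2 * t) % 2 = c (2 * t + 1) % 2)
    {u v : ℕ} (huv : u ≤ v) :
    (∑ j ∈ Finset.Ioc (2 * u + 1) (2 * v + 1), c j) % 2 = 0 := by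
  induction v, huv using Nat.le_induction with
  | base => simp
  | succ v hv ih =>
      have h1 : 2 * (v + 1) + 1 = (2 * v + 2) + 1 := by ring
      rw [h1, Finset.sum_Ioc_succ_top (by omega), Finset.sum_Ioc_succ_top (by omega)]
      have h4 := hp (v + 1) (by omega)
      have h2 : 2 * (v + 1) = 2 * v + 2 := by omega
      rw [h2] at h4
      have h5 : 2 * v + 1 + 1 = 2 * v + 2 := by omega
      rw [h5]
      omega

end AuxDev2

section AuxDev3

lemma Icc1_Ioc (k : ℕ) : Finset.Icc 1 k = Finset.Ioc 0 k := by
  ext j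
  simp only [Finset.mem_Icc, Finset.mem_Ioc]
  omega

lemma OddSet_Ioi_ncard {f : ℕ → ℕ} {m : ℕ} (h : PB f m) (v : ℕ) :
    (OddSet f ∩ Set.Ioi v).ncard = ((OSF f).filter fun x => v < x).card :=
  OddSet_ncard h fun x => v < x

lemma OSF_card_even {f : ℕ → ℕ} {m : ℕ} (h : PB f m) (horth : Orth f)
    (hS : S f m % 2 = 0) : (OSF f).card % 2 = 0 := by
  have h1 := sum_parity_card f (Finset.Icc 1 m)
  have h2 := card_odd_all_parity h horth
  rw [S] at hS
  omega

lemma run_even {f : ℕ → ℕ} {m : ℕ} (h : PB f m) (hspec : SpecialPairs f) {x : ℕ}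
    (hx2 : x % 2 = 0) (hx1 : 1 ≤ x) (hxm : 1 ≤ mult f x) :
    ((Finset.Icc 1 m).filter fun j => Odd (f j) ∧ x < f j).card % 2 = 0 := by
  set A := (Finset.Icc 1 m).filter (fun j => Odd (f j) ∧ x < f j) with hA
  rcases A.eq_empty_or_nonempty with he | hne
  · rw [he]
    simp
  · set w := A.max' hne with hw
    have hwA : w ∈ A := A.max'_mem hne
    have hwA' := hwA
    simp only [hA, Finset.mem_filter, Finset.mem_Icc] at hwA'
    obtain ⟨⟨hw1, hwm⟩, hwodd, hwx⟩ := hwA'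
    obtain ⟨jx, hjx1, hjxm, hjxv⟩ := exists_idx h hx1 hxm
    have hwjx : w < jx := by
      by_contra hc
      have h5 := h.mono hjx1 (by omega : jx ≤ w)
      rw [hjxv] at h5
      omega
    have hweven : w % 2 = 0 := by
      by_contra hc
      have ht := hspec ((w + 1) / 2) (by omega)
      have e1 : 2 * ((w + 1) / 2) - 1 = w := by omega
      have e2 : 2 * ((w + 1) / 2) = w + 1 := by omega
      rw [e1, e2] at ht
      have hfw1odd : f (w + 1) % 2 = 1 := by
        rw [Nat.odd_iff] at hwodd
        omega
      have hge : x ≤ f (w + 1) := by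
        have := h.mono (by omega : 1 ≤ w + 1) (by omega : w + 1 ≤ jx)
        rw [hjxv] at this
        omega
      have hgt : x < f (w + 1) := by
        rcases Nat.eq_or_lt_of_le hge with he' | hl
        · exfalso; omega
        · exact hl
      have hmem : w + 1 ∈ A := by
        simp only [hA, Finset.mem_filter, Finset.mem_Icc]
        exact ⟨⟨by omega, h.idx_le (by omega)⟩, Nat.odd_iff.mpr hfw1odd, hgt⟩
      have := A.le_max' _ hmem
      omega
    have hAeq : A = (Finset.Icc 1 w).filter fun j => Odd (f j) := by
      ext j
      constructor
      · intro hj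
        have hj' := hj
        simp only [hA, Finset.mem_filter, Finset.mem_Icc] at hj'
        exact Finset.mem_filter.mpr
          ⟨Finset.mem_Icc.mpr ⟨hj'.1.1, A.le_max' j hj⟩, hj'.2.1⟩
      · intro hj
        simp only [Finset.mem_filter, Finset.mem_Icc] at hj
        obtain ⟨⟨hj1, hjw⟩, hjodd⟩ := hj
        have hfjw : f w ≤ f j := h.mono hj1 hjw
        simp only [hA, Finset.mem_filter, Finset.mem_Icc]
        exact ⟨⟨hj1, by omega⟩, hjodd, by omega⟩
    have hsum : (∑ j ∈ Finset.Icc 1 w, f j) % 2 = 0 := by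
      obtain ⟨u, hu⟩ : ∃ u, w = 2 * u := ⟨w / 2, by omega⟩
      rw [Icc1_Ioc, hu]
      have hps := pairs_sum_even f (fun t ht => hspec t ht) (by omega : 0 ≤ u)
      simpa using hps
    have hcs := sum_parity_card f (Finset.Icc 1 w)
    rw [hAeq]
    omega

lemma covered {f : ℕ → ℕ} {m : ℕ} (h : PB f m) (horth : Orth f)
    (hS : S f m % 2 = 0) {i : ℕ} (hi : i ∈ OSF f) :
    ∃ a b, PairedOE f a b ∧ b ≤ i ∧ i ≤ a := by
  have hcard := OSF_card_even h horth hS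
  set c := ((OSF f).filter fun x => i < x).card with hc
  have hneg : (OSF f).filter (fun x => x ≤ i)
      = insert i ((OSF f).filter fun x => x < i) := by
    ext x
    simp only [Finset.mem_filter, Finset.mem_insert]
    constructor
    · rintro ⟨hx1, hx2⟩
      rcases Nat.lt_or_ge x i with hl | hg
      · exact Or.inr ⟨hx1, hl⟩
      · left; omega
    · rintro (rfl | ⟨hx1, hx2⟩)
      · exact ⟨hi, by omega⟩
      · exact ⟨hx1, by omega⟩
  have hsplit : c + (1 + ((OSF f).filter fun x => x < i).card) = (OSF f).card := by
    have h1 := Finset.card_filter_add_card_filter_not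
      (s := OSF f) (p := fun x => i < x)
    simp only [not_lt] at h1
    rw [hneg, Finset.card_insert_of_notMem (by simp)] at h1
    omega
  rcases Nat.even_or_odd c with hceven | hcodd
  · -- pair (i, b) with b the largest element below i
    have hce : c % 2 = 0 := Nat.even_iff.mp hceven
    have hbelow : ((OSF f).filter fun x => x < i).Nonempty := by
      rw [← Finset.card_pos]
      omega
    set b := ((OSF f).filter fun x => x < i).max' hbelow with hb
    have hbb := Finset.max'_mem _ hbelow
    rw [← hb] at hbb
    simp only [Finset.mem_filter] at hbb
    refine ⟨i, b, ⟨hbb.2, ?_, ?_, ?_, ?_⟩, by omega, le_rfl⟩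
    · rw [OddSet_eq h]; exact hi
    · rw [OddSet_eq h]; exact hbb.1
    · rw [OddSet_Ioi_ncard h i]
      exact hceven
    · apply Set.eq_empty_iff_forall_notMem.mpr
      intro x hx
      have hx1 := hx.1
      have hx2 : b < x := hx.2.1
      have hx3 : x < i := hx.2.2
      rw [OddSet_eq h] at hx1
      have hmem : x ∈ (OSF f).filter fun x => x < i := Finset.mem_filter.mpr ⟨hx1, hx3⟩
      have hle : x ≤ b := by
        rw [hb]
        exact Finset.le_max' _ _ hmem
      omega
  · -- pair (a, b) with a smallest above i, b largest below a
    have hco : c % 2 = 1 := Nat.odd_iff.mp hcodd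
    have habove : ((OSF f).filter fun x => i < x).Nonempty := by
      rw [← Finset.card_pos]
      omega
    set a := ((OSF f).filter fun x => i < x).min' habove with ha
    have haa := Finset.min'_mem _ habove
    rw [← ha] at haa
    simp only [Finset.mem_filter] at haa
    have herase : ((OSF f).filter fun x => a < x)
        = ((OSF f).filter fun x => i < x).erase a := by
      ext x
      simp only [Finset.mem_filter, Finset.mem_erase]
      constructor
      · rintro ⟨hx1, hx2⟩
        exact ⟨by omega, hx1, by omega⟩
      · rintro ⟨hxne, hx1, hx2⟩
        have := Finset.min'_le _ x (Finset.mem_filter.mpr ⟨hx1, hx2⟩)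
        rw [← ha] at this
        exact ⟨hx1, by omega⟩
    have hbelow : ((OSF f).filter fun x => x < a).Nonempty :=
      ⟨i, Finset.mem_filter.mpr ⟨hi, haa.2⟩⟩
    set b := ((OSF f).filter fun x => x < a).max' hbelow with hb
    have hbb := Finset.max'_mem _ hbelow
    rw [← hb] at hbb
    simp only [Finset.mem_filter] at hbb
    have hbi : b ≤ i := by
      by_contra hcon
      have : b ∈ (OSF f).filter fun x => i < x :=
        Finset.mem_filter.mpr ⟨hbb.1, by omega⟩
      have := Finset.min'_le _ b this
      rw [← ha] at this
      omega
    refine ⟨a, b, ⟨hbb.2, ?_, ?_, ?_, ?_⟩, hbi, le_of_lt haa.2⟩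
    · rw [OddSet_eq h]; exact haa.1
    · rw [OddSet_eq h]; exact hbb.1
    · rw [OddSet_Ioi_ncard h a, herase, Finset.card_erase_of_mem]
      · rw [Nat.even_iff]
        omega
      · exact Finset.mem_filter.mpr ⟨haa.1, haa.2⟩
    · apply Set.eq_empty_iff_forall_notMem.mpr
      intro x hx
      have hx1 := hx.1
      have hx2 : b < x := hx.2.1
      have hx3 : x < a := hx.2.2
      rw [OddSet_eq h] at hx1
      have hmem : x ∈ (OSF f).filter fun x => x < a := Finset.mem_filter.mpr ⟨hx1, hx3⟩
      have hle : x ≤ b := by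
        rw [hb]
        exact Finset.le_max' _ _ hmem
      omega

end AuxDev3

section AuxDev4

lemma OSF_split {f : ℕ → ℕ} {j : ℕ} (hj : j ∈ OSF f) :
    ((OSF f).filter fun x => j < x).card + 1 + ((OSF f).filter fun x => x < j).card
      = (OSF f).card := by
  have hneg : (OSF f).filter (fun x => x ≤ j)
      = insert j ((OSF f).filter fun x => x < j) := by
    ext x
    simp only [Finset.mem_filter, Finset.mem_insert]
    constructor
    · rintro ⟨hx1, hx2⟩
      rcases Nat.lt_or_ge x j with hl | hg
      · exact Or.inr ⟨hx1, hl⟩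
      · left; omega
    · rintro (rfl | ⟨hx1, hx2⟩)
      · exact ⟨hj, by omega⟩
      · exact ⟨hx1, by omega⟩
  have h1 := Finset.card_filter_add_card_filter_not
    (s := OSF f) (p := fun x => j < x)
  simp only [not_lt] at h1
  rw [hneg, Finset.card_insert_of_notMem (by simp)] at h1
  omega

lemma pair_above {f : ℕ → ℕ} {m : ℕ} (h : PB f m) (horth : Orth f)
    (hS : S f m % 2 = 0) {i : ℕ}
    (hc : ((OSF f).filter fun x => i < x).card % 2 = 1) :
    ∃ a b, PairedOE f a b ∧ b ≤ i ∧ i < a := by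
  have hcard := OSF_card_even h horth hS
  have habove : ((OSF f).filter fun x => i < x).Nonempty := by
    rw [← Finset.card_pos]
    omega
  set a := ((OSF f).filter fun x => i < x).min' habove with ha
  have haa := Finset.min'_mem _ habove
  rw [← ha] at haa
  simp only [Finset.mem_filter] at haa
  have herase : ((OSF f).filter fun x => a < x)
      = ((OSF f).filter fun x => i < x).erase a := by
    ext x
    simp only [Finset.mem_filter, Finset.mem_erase]
    constructor
    · rintro ⟨hx1, hx2⟩
      exact ⟨by omega, hx1, by omega⟩
    · rintro ⟨hxne, hx1, hx2⟩
      have hle : a ≤ x := by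
        rw [ha]
        exact Finset.min'_le _ x (Finset.mem_filter.mpr ⟨hx1, hx2⟩)
      exact ⟨hx1, by omega⟩
  have hcae : ((OSF f).filter fun x => a < x).card
      = ((OSF f).filter fun x => i < x).card - 1 := by
    rw [herase, Finset.card_erase_of_mem (Finset.mem_filter.mpr ⟨haa.1, haa.2⟩)]
  have hsplita := OSF_split haa.1
  have hbelow : ((OSF f).filter fun x => x < a).Nonempty := by
    rw [← Finset.card_pos]
    omega
  set b := ((OSF f).filter fun x => x < a).max' hbelow with hb
  have hbb := Finset.max'_mem _ hbelow
  rw [← hb] at hbb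
  simp only [Finset.mem_filter] at hbb
  have hbi : b ≤ i := by
    by_contra hcon
    have hmem : b ∈ (OSF f).filter fun x => i < x :=
      Finset.mem_filter.mpr ⟨hbb.1, by omega⟩
    have : a ≤ b := by
      rw [ha]
      exact Finset.min'_le _ b hmem
    omega
  refine ⟨a, b, ⟨hbb.2, ?_, ?_, ?_, ?_⟩, hbi, haa.2⟩
  · rw [OddSet_eq h]; exact haa.1
  · rw [OddSet_eq h]; exact hbb.1
  · rw [OddSet_Ioi_ncard h a, hcae, Nat.even_iff]
    omega
  · apply Set.eq_empty_iff_forall_notMem.mpr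
    intro x hx
    have hx1 := hx.1
    have hx2 : b < x := hx.2.1
    have hx3 : x < a := hx.2.2
    rw [OddSet_eq h] at hx1
    have hmem : x ∈ (OSF f).filter fun x => x < a := Finset.mem_filter.mpr ⟨hx1, hx3⟩
    have hle : x ≤ b := by
      rw [hb]
      exact Finset.le_max' _ _ hmem
    omega

lemma odd_mult_pos {f : ℕ → ℕ} {i : ℕ} (h : Odd (mult f i)) : 1 ≤ mult f i := by
  rcases h with ⟨t, ht⟩
  omega

/-- anatomy of an interval: value bounds `a ≥ b`, both odd parts,
membership characterization, and the counting facts. -/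
structure Anat (f : ℕ → ℕ) (Δ : Set ℕ) (a b : ℕ) : Prop where
  ble : b ≤ a
  aodd : a % 2 = 1
  bodd : b % 2 = 1
  amult : 1 ≤ mult f a
  bmult : 1 ≤ mult f b
  mem_iff : ∀ x, x ∈ Δ ↔ (1 ≤ mult f x ∧ b ≤ x ∧ x ≤ a)
  cntA : ((OSF f).filter fun x => a < x).card % 2 = 0
  noMid : ∀ x ∈ OSF f, ¬(b < x ∧ x < a)
  split : (a ∈ OSF f ∧ b ∈ OSF f ∧ b < a) ∨ (a = b ∧ a ∉ OSF f)

lemma interval_anatomy {f : ℕ → ℕ} {m : ℕ} (h : PB f m) (horth : Orth f)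
    (hS : S f m % 2 = 0) {Δ : Set ℕ} (hΔ : IsIntervalOE f Δ) :
    ∃ a b, Anat f Δ a b := by
  rcases hΔ with ⟨a, b, ⟨hba, haO, hbO, hev, hIoo⟩, rfl⟩ | ⟨i, hiodd, himult, hncov, rfl⟩
  · rw [OddSet_eq h] at haO hbO
    have haodd := Nat.odd_iff.mp (OSF_odd h horth haO)
    have hbodd := Nat.odd_iff.mp (OSF_odd h horth hbO)
    refine ⟨a, b, ?_, haodd, hbodd, ?_, ?_, fun x => Iff.rfl, ?_, ?_, Or.inl ⟨haO, hbO, hba⟩⟩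
    · omega
    · exact odd_mult_pos ((mem_OSF h).mp haO)
    · exact odd_mult_pos ((mem_OSF h).mp hbO)
    · rw [← OddSet_Ioi_ncard h a, ← Nat.even_iff]
      exact hev
    · intro x hx hmid
      have : x ∈ OddSet f ∩ Set.Ioo b a := by
        constructor
        · rw [OddSet_eq h]; exact hx
        · exact ⟨hmid.1, hmid.2⟩
      rw [hIoo] at this
      exact this
  · have hiO : i ∉ OSF f := by
      intro hiO
      obtain ⟨a, b, hp, hba, hab⟩ := covered h horth hS hiO
      exact hncov ⟨a, b, hp, hba, hab⟩
    have hcnt : ((OSF f).filter fun x => i < x).card % 2 = 0 := by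
      by_contra hcon
      obtain ⟨a, b, hp, hba, hab⟩ := pair_above h horth hS (i := i) (by omega)
      exact hncov ⟨a, b, hp, hba, by omega⟩
    refine ⟨i, i, le_rfl, Nat.odd_iff.mp hiodd, Nat.odd_iff.mp hiodd, himult, himult,
      ?_, hcnt, ?_, Or.inr ⟨rfl, hiO⟩⟩
    · intro x
      constructor
      · intro hx
        rw [Set.mem_singleton_iff] at hx
        subst hx
        exact ⟨himult, le_rfl, le_rfl⟩
      · rintro ⟨h1, h2, h3⟩
        have : x = i := by omega
        rw [this]
        rfl
    · intro x _ hmid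
      omega

lemma Anat.cnt_gt_odd {f : ℕ → ℕ} {Δ : Set ℕ} {a b : ℕ} (an : Anat f Δ a b)
    {v : ℕ} (hbv : b ≤ v) (hva : v < a) :
    ((OSF f).filter fun x => v < x).card % 2 = 1 := by
  rcases an.split with ⟨haO, hbO, hba⟩ | ⟨hab, _⟩
  · have heq : (OSF f).filter (fun x => v < x)
        = insert a ((OSF f).filter fun x => a < x) := by
      ext x
      simp only [Finset.mem_filter, Finset.mem_insert]
      constructor
      · rintro ⟨hx1, hx2⟩
        rcases Nat.lt_trichotomy x a with hl | heq' | hg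
        · exfalso
          exact an.noMid x hx1 ⟨by omega, hl⟩
        · exact Or.inl heq'
        · exact Or.inr ⟨hx1, hg⟩
      · rintro (rfl | ⟨hx1, hx2⟩)
        · exact ⟨haO, hva⟩
        · exact ⟨hx1, by omega⟩
    rw [heq, Finset.card_insert_of_notMem (by simp)]
    have := an.cntA
    omega
  · omega

lemma Anat.cnt_ge_odd {f : ℕ → ℕ} {Δ : Set ℕ} {a b : ℕ} (an : Anat f Δ a b)
    {v : ℕ} (hbv : b < v) (hva : v ≤ a) :
    ((OSF f).filter fun x => v ≤ x).card % 2 = 1 := by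
  rcases an.split with ⟨haO, hbO, hba⟩ | ⟨hab, _⟩
  · have heq : (OSF f).filter (fun x => v ≤ x)
        = insert a ((OSF f).filter fun x => a < x) := by
      ext x
      simp only [Finset.mem_filter, Finset.mem_insert]
      constructor
      · rintro ⟨hx1, hx2⟩
        rcases Nat.lt_trichotomy x a with hl | heq' | hg
        · exfalso
          exact an.noMid x hx1 ⟨by omega, hl⟩
        · exact Or.inl heq'
        · exact Or.inr ⟨hx1, hg⟩
      · rintro (rfl | ⟨hx1, hx2⟩)
        · exact ⟨haO, by omega⟩
        · exact ⟨hx1, by omega⟩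
    rw [heq, Finset.card_insert_of_notMem (by simp)]
    have := an.cntA
    omega
  · omega

lemma Anat.cnt_ge_b_even {f : ℕ → ℕ} {Δ : Set ℕ} {a b : ℕ} (an : Anat f Δ a b) :
    ((OSF f).filter fun x => b ≤ x).card % 2 = 0 := by
  rcases an.split with ⟨haO, hbO, hba⟩ | ⟨hab, haO⟩
  · have heq : (OSF f).filter (fun x => b ≤ x)
        = insert b ((OSF f).filter fun x => b < x) := by
      ext x
      simp only [Finset.mem_filter, Finset.mem_insert]
      constructor
      · rintro ⟨hx1, hx2⟩
        rcases Nat.eq_or_lt_of_le hx2 with heq' | hg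
        · exact Or.inl heq'.symm
        · exact Or.inr ⟨hx1, hg⟩
      · rintro (rfl | ⟨hx1, hx2⟩)
        · exact ⟨hbO, le_rfl⟩
        · exact ⟨hx1, by omega⟩
    rw [heq, Finset.card_insert_of_notMem (by simp)]
    have := an.cnt_gt_odd (le_rfl) hba
    omega
  · have heq : (OSF f).filter (fun x => b ≤ x)
        = (OSF f).filter fun x => a < x := by
      ext x
      simp only [Finset.mem_filter]
      constructor
      · rintro ⟨hx1, hx2⟩
        rcases Nat.eq_or_lt_of_le hx2 with heq' | hg
        · exfalso
          apply haO
          rw [hab, heq']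
          exact hx1
        · exact ⟨hx1, by omega⟩
      · rintro ⟨hx1, hx2⟩
        exact ⟨hx1, by omega⟩
    rw [heq]
    exact an.cntA

lemma Anat.val_odd {f : ℕ → ℕ} {m : ℕ} (h : PB f m) (horth : Orth f)
    (hspec : SpecialPairs f) {Δ : Set ℕ} {a b : ℕ} (an : Anat f Δ a b)
    {x : ℕ} (hx : x ∈ Δ) : x % 2 = 1 := by
  obtain ⟨hxm, hbx, hxa⟩ := (an.mem_iff x).mp hx
  by_contra hcon
  have hxeven : x % 2 = 0 := by omega
  have hxb : b < x := by
    have := an.bodd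
    omega
  have hxa' : x < a := by
    have := an.aodd
    omega
  have h1 := an.cnt_gt_odd (by omega : b ≤ x) hxa'
  have h2 := card_odd_gt_parity h horth x
  have h3 := run_even h hspec hxeven (by have := an.bodd; omega) hxm
  omega

end AuxDev4

section AuxDev5

lemma Jset_mem {f : ℕ → ℕ} {m : ℕ} {Δ : Set ℕ} {a b : ℕ} (h : PB f m)
    (an : Anat f Δ a b) {j : ℕ} :
    j ∈ Jset f Δ ↔ 1 ≤ j ∧ b ≤ f j ∧ f j ≤ a := by
  constructor
  · rintro ⟨hj1, hj2⟩
    obtain ⟨_, h2, h3⟩ := (an.mem_iff _).mp hj2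
    exact ⟨hj1, h2, h3⟩
  · rintro ⟨hj1, hj2, hj3⟩
    exact ⟨hj1, (an.mem_iff _).mpr
      ⟨mult_pos h hj1 (by have := an.bodd; omega), hj2, hj3⟩⟩

/-- block data of an interval: `J(Δ) = [s,e]` with `f s = a`, `f e = b`,
`s` odd, `e` even. -/
structure Blk (f : ℕ → ℕ) (m : ℕ) (Δ : Set ℕ) (s e a b : ℕ) : Prop where
  intv : IsIntervalOE f Δ
  an : Anat f Δ a b
  least : IsLeast (Jset f Δ) s
  greatest : IsGreatest (Jset f Δ) e
  fs : f s = a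
  fe : f e = b
  sodd : s % 2 = 1
  eeven : e % 2 = 0
  slt : s < e
  etop : e ≤ m

lemma blk_exists {f : ℕ → ℕ} {m : ℕ} (h : PB f m) (horth : Orth f)
    (hS : S f m % 2 = 0) {Δ : Set ℕ} (hΔ : IsIntervalOE f Δ) :
    ∃ s e a b, Blk f m Δ s e a b := by
  obtain ⟨a, b, an⟩ := interval_anatomy h horth hS hΔ
  have hb1 : 1 ≤ b := by have := an.bodd; omega
  have ha1 : 1 ≤ a := by have := an.aodd; omega
  have hble : b ≤ a := an.ble
  obtain ⟨ja, hja1, hjam, hjav⟩ := exists_idx h ha1 an.amult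
  obtain ⟨jb, hjb1, hjbm, hjbv⟩ := exists_idx h hb1 an.bmult
  have hjaJ : ja ∈ Jset f Δ := (Jset_mem h an).mpr ⟨hja1, by omega, by omega⟩
  have hjbJ : jb ∈ Jset f Δ := (Jset_mem h an).mpr ⟨hjb1, by omega, le_trans (by omega) an.ble⟩
  set T := (Finset.Icc 1 m).filter (fun j => j ∈ Jset f Δ) with hT
  have hmemT : ∀ j, j ∈ T ↔ j ∈ Jset f Δ := by
    intro j
    simp only [hT, Finset.mem_filter, Finset.mem_Icc]
    constructor
    · exact fun hj => hj.2
    · intro hj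
      obtain ⟨hj1, hj2, _⟩ := (Jset_mem h an).mp hj
      exact ⟨⟨hj1, h.idx_le (by omega)⟩, hj⟩
  have hTne : T.Nonempty := ⟨ja, (hmemT ja).mpr hjaJ⟩
  set s := T.min' hTne with hs
  set e := T.max' hTne with he
  have hsJ : s ∈ Jset f Δ := (hmemT s).mp (T.min'_mem hTne)
  have heJ : e ∈ Jset f Δ := (hmemT e).mp (T.max'_mem hTne)
  have hleast : IsLeast (Jset f Δ) s := by
    refine ⟨hsJ, fun j hj => ?_⟩
    rw [hs]
    exact T.min'_le j ((hmemT j).mpr hj)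
  have hgreatest : IsGreatest (Jset f Δ) e := by
    refine ⟨heJ, fun j hj => ?_⟩
    rw [he]
    exact T.le_max' j ((hmemT j).mpr hj)
  have hs1 : 1 ≤ s := ((Jset_mem h an).mp hsJ).1
  have he1 : 1 ≤ e := ((Jset_mem h an).mp heJ).1
  have hse : s ≤ e := hgreatest.2 hsJ
  have hetop : e ≤ m := by
    have := ((Jset_mem h an).mp heJ).2.1
    exact h.idx_le (by omega)
  have hfs : f s = a := by
    have h1 : f s ≤ a := ((Jset_mem h an).mp hsJ).2.2
    have h2 : s ≤ ja := hleast.2 hjaJ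
    have h3 : f ja ≤ f s := h.mono hs1 h2
    omega
  have hfe : f e = b := by
    have h1 : b ≤ f e := ((Jset_mem h an).mp heJ).2.1
    have h2 : jb ≤ e := hgreatest.2 hjbJ
    have h3 : f e ≤ f jb := h.mono hjb1 h2
    omega
  have hkey : ∀ j, 1 ≤ j → j < s → a + 1 ≤ f j := by
    intro j hj1 hjs
    have h1 : f s ≤ f j := h.mono hj1 (by omega)
    rcases Nat.eq_or_lt_of_le (by omega : a ≤ f j) with heq | hlt
    · exfalso
      have : j ∈ Jset f Δ := (Jset_mem h an).mpr ⟨hj1, by omega, by omega⟩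
      have := hleast.2 this
      omega
    · omega
  have hsodd : s % 2 = 1 := by
    have hset : (Finset.Icc 1 m).filter (fun j => a + 1 ≤ f j) = Finset.Icc 1 (s - 1) := by
      ext j
      simp only [Finset.mem_filter, Finset.mem_Icc]
      constructor
      · rintro ⟨⟨hj1, hjm⟩, hfj⟩
        refine ⟨hj1, ?_⟩
        by_contra hcon
        have : f j ≤ f s := h.mono hs1 (by omega)
        omega
      · rintro ⟨hj1, hjs⟩
        exact ⟨⟨hj1, by omega⟩, hkey j hj1 (by omega)⟩
    have hcard : ((Finset.Icc 1 m).filter fun j => a + 1 ≤ f j).card = s - 1 := by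
      rw [hset, Nat.card_Icc]
      omega
    have hpar := Ncard_parity h (v := a + 1) (by omega)
    have hconv : (OSF f).filter (fun i => a + 1 ≤ i) = (OSF f).filter (fun i => a < i) := by
      ext i
      simp only [Finset.mem_filter]
      exact and_congr_right fun _ => by omega
    rw [hconv] at hpar
    have := an.cntA
    omega
  have heeven : e % 2 = 0 := by
    have hset : (Finset.Icc 1 m).filter (fun j => b ≤ f j) = Finset.Icc 1 e := by
      ext j
      simp only [Finset.mem_filter, Finset.mem_Icc]
      constructor
      · rintro ⟨⟨hj1, hjm⟩, hfj⟩
        refine ⟨hj1, ?_⟩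
        by_contra hcon
        have h1 : f j ≤ f e := h.mono he1 (by omega)
        have : j ∈ Jset f Δ := (Jset_mem h an).mpr ⟨hj1, hfj, by omega⟩
        have := hgreatest.2 this
        omega
      · rintro ⟨hj1, hje⟩
        have h1 : f e ≤ f j := h.mono hj1 hje
        exact ⟨⟨hj1, by omega⟩, by omega⟩
    have hcard : ((Finset.Icc 1 m).filter fun j => b ≤ f j).card = e := by
      rw [hset, Nat.card_Icc]
      omega
    have hpar := Ncard_parity h (v := b) hb1
    have := an.cnt_ge_b_even
    omega
  exact ⟨s, e, a, b, hΔ, an, hleast, hgreatest, hfs, hfe, hsodd, heeven, by omega, hetop⟩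

lemma Blk.J_iff {f : ℕ → ℕ} {m : ℕ} {Δ : Set ℕ} {s e a b : ℕ} (h : PB f m)
    (bl : Blk f m Δ s e a b) {j : ℕ} :
    j ∈ Jset f Δ ↔ s ≤ j ∧ j ≤ e := by
  constructor
  · intro hj
    exact ⟨bl.least.2 hj, bl.greatest.2 hj⟩
  · rintro ⟨h1, h2⟩
    have hs1 : 1 ≤ s := ((Jset_mem h bl.an).mp bl.least.1).1
    have h3 : f j ≤ f s := h.mono hs1 h1
    have h4 : f e ≤ f j := h.mono (by omega) h2
    rw [bl.fs] at h3
    rw [bl.fe] at h4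
    exact (Jset_mem h bl.an).mpr ⟨by omega, h4, h3⟩

lemma Blk.fodd {f : ℕ → ℕ} {m : ℕ} {Δ : Set ℕ} {s e a b : ℕ} (h : PB f m)
    (horth : Orth f) (hspec : SpecialPairs f) (bl : Blk f m Δ s e a b) {j : ℕ}
    (h1 : s ≤ j) (h2 : j ≤ e) : f j % 2 = 1 := by
  have hj : j ∈ Jset f Δ := (bl.J_iff h).mpr ⟨h1, h2⟩
  exact bl.an.val_odd h horth hspec hj.2

lemma interval_eq_of_inter {f : ℕ → ℕ} {m : ℕ} (h : PB f m) (horth : Orth f)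
    (hS : S f m % 2 = 0) {Δ Δ' : Set ℕ} (hΔ : IsIntervalOE f Δ)
    (hΔ' : IsIntervalOE f Δ') (hne : (Δ ∩ Δ').Nonempty) : Δ = Δ' := by
  obtain ⟨x, hx1, hx2⟩ := hne
  obtain ⟨a, b, an⟩ := interval_anatomy h horth hS hΔ
  obtain ⟨a', b', an'⟩ := interval_anatomy h horth hS hΔ'
  have key : ∀ {Δ1 Δ2 : Set ℕ} {a1 b1 a2 b2 : ℕ}, Anat f Δ1 a1 b1 → Anat f Δ2 a2 b2 →
      x ∈ Δ1 → x ∈ Δ2 → a1 ≤ a2 := by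
    intro Δ1 Δ2 a1 b1 a2 b2 an1 an2 hm1 hm2
    by_contra hcon
    obtain ⟨_, hb1, ha1⟩ := (an1.mem_iff x).mp hm1
    obtain ⟨_, hb2, ha2⟩ := (an2.mem_iff x).mp hm2
    have h1 := an1.cnt_gt_odd (v := a2) (by omega) (by omega)
    have h2 := an2.cntA
    omega
  have keyb : ∀ {Δ1 Δ2 : Set ℕ} {a1 b1 a2 b2 : ℕ}, Anat f Δ1 a1 b1 → Anat f Δ2 a2 b2 →
      x ∈ Δ1 → x ∈ Δ2 → b1 ≤ b2 := by
    intro Δ1 Δ2 a1 b1 a2 b2 an1 an2 hm1 hm2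
    by_contra hcon
    obtain ⟨_, hb1, ha1⟩ := (an1.mem_iff x).mp hm1
    obtain ⟨_, hb2, ha2⟩ := (an2.mem_iff x).mp hm2
    have h1 := an2.cnt_ge_odd (v := b1) (by omega) (by omega)
    have h2 := an1.cnt_ge_b_even
    omega
  have ha : a = a' := le_antisymm (key an an' hx1 hx2) (key an' an hx2 hx1)
  have hb : b = b' := le_antisymm (keyb an an' hx1 hx2) (keyb an' an hx2 hx1)
  ext y
  rw [an.mem_iff y, an'.mem_iff y, ha, hb]

lemma interval_eq_of_Jmem {f : ℕ → ℕ} {m : ℕ} (h : PB f m) (horth : Orth f)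
    (hS : S f m % 2 = 0) {Δ Δ' : Set ℕ} (hΔ : IsIntervalOE f Δ)
    (hΔ' : IsIntervalOE f Δ') {j : ℕ} (hj : j ∈ Jset f Δ) (hj' : j ∈ Jset f Δ') :
    Δ = Δ' :=
  interval_eq_of_inter h horth hS hΔ hΔ' ⟨f j, hj.2, hj'.2⟩

end AuxDev5

section AuxDev6

lemma Sz_succ (c : ℕ → ℤ) (k : ℕ) : Sz c (k + 1) = Sz c k + c (k + 1) :=
  Finset.sum_Icc_succ_top (by omega) c

lemma least_eq {f : ℕ → ℕ} {Δ : Set ℕ} {j j' : ℕ} (h1 : IsLeast (Jset f Δ) j)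
    (h2 : IsLeast (Jset f Δ) j') : j = j' :=
  le_antisymm (h1.2 h2.1) (h2.2 h1.1)

lemma greatest_eq {f : ℕ → ℕ} {Δ : Set ℕ} {j j' : ℕ} (h1 : IsGreatest (Jset f Δ) j)
    (h2 : IsGreatest (Jset f Δ) j') : j = j' :=
  le_antisymm (h2.2 h1.1) (h1.2 h2.1)

lemma least_not_greatest {f : ℕ → ℕ} {m : ℕ} (h : PB f m) (horth : Orth f)
    (hS : S f m % 2 = 0) {Δ Δ' : Set ℕ} (hΔ : IsIntervalOE f Δ)
    (hΔ' : IsIntervalOE f Δ') {j : ℕ} (hl : IsLeast (Jset f Δ) j)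
    (hg : IsGreatest (Jset f Δ') j) : False := by
  have heq : Δ = Δ' := interval_eq_of_Jmem h horth hS hΔ hΔ' hl.1 hg.1
  subst heq
  obtain ⟨s, e, a, b, bl⟩ := blk_exists h horth hS hΔ
  have hs : s = j := least_eq bl.least hl
  have he : e = j := greatest_eq bl.greatest hg
  have := bl.slt
  omega

lemma zeta_least {f : ℕ → ℕ} {Δ : Set ℕ} {j : ℕ} (hΔ : IsIntervalOE f Δ)
    (hl : IsLeast (Jset f Δ) j) : zetaOE f j = 1 := by
  unfold zetaOE
  rw [if_pos ⟨Δ, hΔ, hl⟩]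

lemma zeta_greatest {f : ℕ → ℕ} {m : ℕ} (h : PB f m) (horth : Orth f)
    (hS : S f m % 2 = 0) {Δ : Set ℕ} {j : ℕ} (hΔ : IsIntervalOE f Δ)
    (hg : IsGreatest (Jset f Δ) j) : zetaOE f j = -1 := by
  unfold zetaOE
  rw [if_neg, if_pos ⟨Δ, hΔ, hg⟩]
  rintro ⟨Δ', hΔ', hl⟩
  exact least_not_greatest h horth hS hΔ' hΔ hl hg

lemma zeta_eq_zero {f : ℕ → ℕ} {j : ℕ}
    (hnl : ¬ ∃ Δ, IsIntervalOE f Δ ∧ IsLeast (Jset f Δ) j)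
    (hng : ¬ ∃ Δ, IsIntervalOE f Δ ∧ IsGreatest (Jset f Δ) j) : zetaOE f j = 0 := by
  unfold zetaOE
  rw [if_neg hnl, if_neg hng]

lemma zeta_inv (f : ℕ → ℕ) (j : ℕ) :
    (zetaOE f j = 1 ∧ ∃ Δ, IsIntervalOE f Δ ∧ IsLeast (Jset f Δ) j) ∨
    (zetaOE f j = -1 ∧ (∃ Δ, IsIntervalOE f Δ ∧ IsGreatest (Jset f Δ) j) ∧
      ¬ ∃ Δ, IsIntervalOE f Δ ∧ IsLeast (Jset f Δ) j) ∨
    (zetaOE f j = 0 ∧ (¬ ∃ Δ, IsIntervalOE f Δ ∧ IsLeast (Jset f Δ) j) ∧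
      ¬ ∃ Δ, IsIntervalOE f Δ ∧ IsGreatest (Jset f Δ) j) := by
  unfold zetaOE
  split_ifs with h1 h2
  · exact Or.inl ⟨rfl, h1⟩
  · exact Or.inr (Or.inl ⟨rfl, h2, h1⟩)
  · exact Or.inr (Or.inr ⟨rfl, h1, h2⟩)

lemma blk_of_least {f : ℕ → ℕ} {m : ℕ} (h : PB f m) (horth : Orth f)
    (hS : S f m % 2 = 0) {Δ : Set ℕ} {j : ℕ} (hΔ : IsIntervalOE f Δ)
    (hl : IsLeast (Jset f Δ) j) : ∃ e a b, Blk f m Δ j e a b := by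
  obtain ⟨s, e, a, b, bl⟩ := blk_exists h horth hS hΔ
  have hs : s = j := least_eq bl.least hl
  subst hs
  exact ⟨e, a, b, bl⟩

lemma blk_of_greatest {f : ℕ → ℕ} {m : ℕ} (h : PB f m) (horth : Orth f)
    (hS : S f m % 2 = 0) {Δ : Set ℕ} {j : ℕ} (hΔ : IsIntervalOE f Δ)
    (hg : IsGreatest (Jset f Δ) j) : ∃ s a b, Blk f m Δ s j a b := by
  obtain ⟨s, e, a, b, bl⟩ := blk_exists h horth hS hΔ
  have he : e = j := greatest_eq bl.greatest hg
  subst he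
  exact ⟨s, a, b, bl⟩

/-- some block is "open" at position `r`: `s ≤ r < e`. -/
def OpenAt (f : ℕ → ℕ) (m r : ℕ) : Prop :=
  ∃ Δ s e a b, Blk f m Δ s e a b ∧ s ≤ r ∧ r < e

lemma Sz_zeta {f : ℕ → ℕ} {m : ℕ} (h : PB f m) (horth : Orth f)
    (hS : S f m % 2 = 0) (r : ℕ) :
    Sz (zetaOE f) r = if OpenAt f m r then 1 else 0 := by
  induction r with
  | zero =>
      rw [if_neg]
      · rfl
      · rintro ⟨Δ, s, e, a, b, bl, hs, hr⟩
        have : 1 ≤ s := ((Jset_mem h bl.an).mp bl.least.1).1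
        omega
  | succ r ih =>
      rw [Sz_succ, ih]
      rcases zeta_inv f (r + 1) with ⟨hz, Δ, hΔ, hl⟩ | ⟨hz, ⟨Δ, hΔ, hg⟩, hnl⟩ |
        ⟨hz, hnl, hng⟩
      · obtain ⟨e, a, b, bl⟩ := blk_of_least h horth hS hΔ hl
        rw [hz, if_neg, if_pos]
        · omega
        · exact ⟨Δ, r + 1, e, a, b, bl, le_rfl, bl.slt⟩
        · rintro ⟨Δ', s', e', a', b', bl', hs', hr'⟩
          have hmem : r + 1 ∈ Jset f Δ' := (bl'.J_iff h).mpr ⟨by omega, by omega⟩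
          have heq : Δ = Δ' := interval_eq_of_Jmem h horth hS hΔ bl'.intv hl.1 hmem
          subst heq
          have : r + 1 ≤ s' := hl.2 bl'.least.1
          omega
      · obtain ⟨s, a, b, bl⟩ := blk_of_greatest h horth hS hΔ hg
        rw [hz, if_pos, if_neg]
        · omega
        · rintro ⟨Δ', s', e', a', b', bl', hs', hr'⟩
          have hmem : r + 1 ∈ Jset f Δ' := (bl'.J_iff h).mpr ⟨by omega, by omega⟩
          have heq : Δ = Δ' := interval_eq_of_Jmem h horth hS hΔ bl'.intv hg.1 hmem
          subst heq
          have : e' ≤ r + 1 := hg.2 bl'.greatest.1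
          omega
        · exact ⟨Δ, s, r + 1, a, b, bl, by have := bl.slt; omega, by omega⟩
      · rw [hz]
        have hiff : OpenAt f m r ↔ OpenAt f m (r + 1) := by
          constructor
          · rintro ⟨Δ, s, e, a, b, bl, hs, hr⟩
            refine ⟨Δ, s, e, a, b, bl, by omega, ?_⟩
            rcases Nat.eq_or_lt_of_le (by omega : r + 1 ≤ e) with heq | hlt
            · exfalso
              apply hng
              refine ⟨Δ, bl.intv, ?_⟩
              rw [heq]
              exact bl.greatest
            · exact hlt
          · rintro ⟨Δ, s, e, a, b, bl, hs, hr⟩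
            refine ⟨Δ, s, e, a, b, bl, ?_, by omega⟩
            rcases Nat.eq_or_lt_of_le hs with heq | hlt
            · exfalso
              apply hnl
              refine ⟨Δ, bl.intv, ?_⟩
              rw [← heq]
              exact bl.least
            · omega
        rcases Classical.em (OpenAt f m r) with ho | ho
        · rw [if_pos ho, if_pos (hiff.mp ho)]
          omega
        · rw [if_neg ho, if_neg (fun hh => ho (hiff.mpr hh))]
          omega

lemma not_openAt_top {f : ℕ → ℕ} {m : ℕ} (h : PB f m) {r : ℕ} (hr : m ≤ r) :
    ¬ OpenAt f m r := by
  rintro ⟨Δ, s, e, a, b, bl, hs, hre⟩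
  have := bl.etop
  omega

lemma Sz_zeta_nonneg {f : ℕ → ℕ} {m : ℕ} (h : PB f m) (horth : Orth f)
    (hS : S f m % 2 = 0) (r : ℕ) :
    0 ≤ Sz (zetaOE f) r ∧ Sz (zetaOE f) r ≤ 1 := by
  rw [Sz_zeta h horth hS r]
  split_ifs <;> omega

end AuxDev6

section AuxDev7

/-- the modified partition `λ + ζ(λ)` -/
noncomputable def gAdd (f : ℕ → ℕ) : ℕ → ℕ := fun j => ((f j : ℤ) + zetaOE f j).toNat

lemma zeta_one_blk {f : ℕ → ℕ} {m : ℕ} (h : PB f m) (horth : Orth f)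
    (hS : S f m % 2 = 0) {j : ℕ} (hz : zetaOE f j = 1) :
    ∃ Δ e a b, Blk f m Δ j e a b ∧ f j = a := by
  rcases zeta_inv f j with ⟨hz', Δ, hΔ, hl⟩ | ⟨hz', _, _⟩ | ⟨hz', _, _⟩
  · obtain ⟨e, a, b, bl⟩ := blk_of_least h horth hS hΔ hl
    exact ⟨Δ, e, a, b, bl, bl.fs⟩
  · omega
  · omega

lemma zeta_negone_blk {f : ℕ → ℕ} {m : ℕ} (h : PB f m) (horth : Orth f)
    (hS : S f m % 2 = 0) {j : ℕ} (hz : zetaOE f j = -1) :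
    ∃ Δ s a b, Blk f m Δ s j a b ∧ f j = b := by
  rcases zeta_inv f j with ⟨hz', _⟩ | ⟨hz', ⟨Δ, hΔ, hg⟩, _⟩ | ⟨hz', _, _⟩
  · omega
  · obtain ⟨s, a, b, bl⟩ := blk_of_greatest h horth hS hΔ hg
    exact ⟨Δ, s, a, b, bl, bl.fe⟩
  · omega

lemma zeta_trichot (f : ℕ → ℕ) (j : ℕ) :
    zetaOE f j = 1 ∨ zetaOE f j = -1 ∨ zetaOE f j = 0 := by
  rcases zeta_inv f j with ⟨hz, _⟩ | ⟨hz, _, _⟩ | ⟨hz, _, _⟩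
  · exact Or.inl hz
  · exact Or.inr (Or.inl hz)
  · exact Or.inr (Or.inr hz)

lemma gval {f : ℕ → ℕ} {m : ℕ} (h : PB f m) (horth : Orth f)
    (hS : S f m % 2 = 0) (j : ℕ) :
    (gAdd f j : ℤ) = (f j : ℤ) + zetaOE f j := by
  unfold gAdd
  rw [Int.toNat_of_nonneg]
  rcases zeta_trichot f j with hz | hz | hz
  · rw [hz]; omega
  · obtain ⟨Δ, s, a, b, bl, hfb⟩ := zeta_negone_blk h horth hS hz
    have hbodd := bl.an.bodd
    rw [hz, hfb]
    omega
  · rw [hz]; omega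

lemma gAdd_bnd {f : ℕ → ℕ} {m : ℕ} (h : PB f m) (horth : Orth f)
    (hS : S f m % 2 = 0) {j : ℕ} (hj : m < j) : gAdd f j = 0 := by
  have hf0 : f j = 0 := h.bnd j hj
  have hz : zetaOE f j = 0 := by
    rcases zeta_trichot f j with hz | hz | hz
    · obtain ⟨Δ, e, a, b, bl, hfa⟩ := zeta_one_blk h horth hS hz
      have h1 := bl.slt
      have h2 := bl.etop
      omega
    · obtain ⟨Δ, s, a, b, bl, hfb⟩ := zeta_negone_blk h horth hS hz
      have hbodd := bl.an.bodd
      omega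
    · exact hz
  unfold gAdd
  rw [hf0, hz]
  rfl

lemma gAdd_le_succ {f : ℕ → ℕ} {m : ℕ} (h : PB f m) (horth : Orth f)
    (hS : S f m % 2 = 0) {j : ℕ} (hj : 1 ≤ j) : gAdd f (j + 1) ≤ gAdd f j := by
  have hmono : f (j + 1) ≤ f j := h.mono hj (by omega)
  suffices hZ : (f (j + 1) : ℤ) + zetaOE f (j + 1) ≤ (f j : ℤ) + zetaOE f j by
    have e1 := gval h horth hS j
    have e2 := gval h horth hS (j + 1)
    omega
  rcases zeta_trichot f (j + 1) with hz2 | hz2 | hz2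
  · obtain ⟨Δ', e', a', b', bl', hfa'⟩ := zeta_one_blk h horth hS hz2
    have hne : f j ≠ f (j + 1) := by
      intro heq
      have hjJ : j ∈ Jset f Δ' := (Jset_mem h bl'.an).mpr
        ⟨hj, by rw [heq, hfa']; exact bl'.an.ble, by rw [heq, hfa']⟩
      have := bl'.least.2 hjJ
      omega
    rcases zeta_trichot f j with hz1 | hz1 | hz1
    · rw [hz1, hz2]; omega
    · obtain ⟨Δ, s, a, b, bl, hfb⟩ := zeta_negone_blk h horth hS hz1
      have hbodd := bl.an.bodd
      have haodd' := bl'.an.aodd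
      rw [hz1, hz2]
      have : f (j + 1) + 2 ≤ f j := by omega
      omega
    · rw [hz1, hz2]; omega
  · -- `ζ(j+1) ≤ 0` cases
    have hz2le : zetaOE f (j + 1) ≤ 0 := by rw [hz2]; omega
    rcases zeta_trichot f j with hz1 | hz1 | hz1
    · rw [hz1]; omega
    · obtain ⟨Δ, s, a, b, bl, hfb⟩ := zeta_negone_blk h horth hS hz1
      have hne : f (j + 1) ≠ f j := by
        intro heq
        have hj1J : j + 1 ∈ Jset f Δ := (Jset_mem h bl.an).mpr
          ⟨by omega, by rw [heq, hfb], by rw [heq, hfb]; exact bl.an.ble⟩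
        have := bl.greatest.2 hj1J
        omega
      rw [hz1]; omega
    · rw [hz1]; omega
  · have hz2le : zetaOE f (j + 1) ≤ 0 := by rw [hz2]
    rcases zeta_trichot f j with hz1 | hz1 | hz1
    · rw [hz1]; omega
    · obtain ⟨Δ, s, a, b, bl, hfb⟩ := zeta_negone_blk h horth hS hz1
      have hne : f (j + 1) ≠ f j := by
        intro heq
        have hj1J : j + 1 ∈ Jset f Δ := (Jset_mem h bl.an).mpr
          ⟨by omega, by rw [heq, hfb], by rw [heq, hfb]; exact bl.an.ble⟩
        have := bl.greatest.2 hj1J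
        omega
      rw [hz1]; omega
    · rw [hz1]; omega

lemma gAdd_mono {f : ℕ → ℕ} {m : ℕ} (h : PB f m) (horth : Orth f)
    (hS : S f m % 2 = 0) : ∀ ⦃j k : ℕ⦄, 1 ≤ j → j ≤ k → gAdd f k ≤ gAdd f j := by
  intro j k hj hjk
  induction k, hjk using Nat.le_induction with
  | base => exact le_rfl
  | succ k hk ih => exact le_trans (gAdd_le_succ h horth hS (by omega)) ih

lemma gAdd_PB {f : ℕ → ℕ} {m : ℕ} (h : PB f m) (horth : Orth f)
    (hS : S f m % 2 = 0) : PB (gAdd f) m :=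
  ⟨gAdd_mono h horth hS, fun j hj => gAdd_bnd h horth hS hj, h.pos⟩

lemma S_gAdd {f : ℕ → ℕ} {m : ℕ} (h : PB f m) (horth : Orth f)
    (hS : S f m % 2 = 0) (r : ℕ) :
    (S (gAdd f) r : ℤ) = (S f r : ℤ) + Sz (zetaOE f) r := by
  induction r with
  | zero => rfl
  | succ r ih =>
      rw [S_succ, S_succ, Sz_succ]
      push_cast
      rw [gval h horth hS (r + 1)]
      omega

lemma S_gAdd_top {f : ℕ → ℕ} {m : ℕ} (h : PB f m) (horth : Orth f)
    (hS : S f m % 2 = 0) {r : ℕ} (hr : m ≤ r) : S (gAdd f) r = S f r := by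
  have h1 := S_gAdd h horth hS r
  rw [Sz_zeta h horth hS r, if_neg (not_openAt_top h hr)] at h1
  omega

lemma gAdd_partition {f : ℕ → ℕ} {m N : ℕ} (h : PB f m) (horth : Orth f)
    (hS : S f m % 2 = 0) (hfN : S f m = N) : IsPartition (gAdd f) N := by
  refine ⟨gAdd_mono h horth hS, ⟨m, fun j hj => gAdd_bnd h horth hS hj⟩, ?_⟩
  intro m' hm'
  have hM : S (gAdd f) (max m' m) = S (gAdd f) m' :=
    S_stable (gAdd f) (le_max_left m' m) hm'
  have hM2 : S (gAdd f) (max m' m) = S f (max m' m) :=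
    S_gAdd_top h horth hS (le_max_right m' m)
  have hM3 : S f (max m' m) = S f m := S_stable f (le_max_right m' m) h.bnd
  omega

lemma Dom_f_gAdd {f : ℕ → ℕ} {m : ℕ} (h : PB f m) (horth : Orth f)
    (hS : S f m % 2 = 0) : Dom f (gAdd f) := by
  intro k
  have h1 := S_gAdd h horth hS k
  have h2 := (Sz_zeta_nonneg h horth hS k).1
  omega

end AuxDev7

section AuxDev8

lemma exists_interval_of_odd {f : ℕ → ℕ} {m : ℕ} (h : PB f m) {j : ℕ}
    (hj1 : 1 ≤ j) (hjodd : f j % 2 = 1) :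
    ∃ Δ, IsIntervalOE f Δ ∧ j ∈ Jset f Δ := by
  by_cases hcov : ∃ a b, PairedOE f a b ∧ b ≤ f j ∧ f j ≤ a
  · obtain ⟨a, b, hp, hba, hab⟩ := hcov
    refine ⟨{i | 1 ≤ mult f i ∧ b ≤ i ∧ i ≤ a}, Or.inl ⟨a, b, hp, rfl⟩, hj1, ?_⟩
    exact ⟨mult_pos h hj1 (by omega), hba, hab⟩
  · exact ⟨{f j}, Or.inr ⟨f j, Nat.odd_iff.mpr hjodd, mult_pos h hj1 (by omega),
      hcov, rfl⟩, hj1, rfl⟩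

lemma zeta_zero_of_even {f : ℕ → ℕ} {m : ℕ} (h : PB f m) (horth : Orth f)
    (hS : S f m % 2 = 0) {j : ℕ} (hje : f j % 2 = 0) : zetaOE f j = 0 := by
  rcases zeta_trichot f j with hz | hz | hz
  · obtain ⟨Δ, e, a, b, bl, hfa⟩ := zeta_one_blk h horth hS hz
    have := bl.an.aodd
    omega
  · obtain ⟨Δ, s, a, b, bl, hfb⟩ := zeta_negone_blk h horth hS hz
    have := bl.an.bodd
    omega
  · exact hz

lemma zeta_zero_of_interior {f : ℕ → ℕ} {m : ℕ} (h : PB f m) (horth : Orth f)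
    (hS : S f m % 2 = 0) {Δ : Set ℕ} {s e a b : ℕ} (bl : Blk f m Δ s e a b)
    {j : ℕ} (hjJ : j ∈ Jset f Δ) (hs : s < j) (he : j < e) : zetaOE f j = 0 := by
  apply zeta_eq_zero
  · rintro ⟨Δ', hΔ', hl⟩
    have heq : Δ' = Δ := interval_eq_of_Jmem h horth hS hΔ' bl.intv hl.1 hjJ
    subst heq
    have := least_eq hl bl.least
    omega
  · rintro ⟨Δ', hΔ', hg⟩
    have heq : Δ' = Δ := interval_eq_of_Jmem h horth hS hΔ' bl.intv hg.1 hjJ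
    subst heq
    have := greatest_eq hg bl.greatest
    omega

lemma greatest_of_next_notin {f : ℕ → ℕ} {m : ℕ} (h : PB f m) {Δ : Set ℕ}
    {a b : ℕ} (an : Anat f Δ a b) {j : ℕ} (hjJ : j ∈ Jset f Δ)
    (hnot : f (j + 1) ∉ Δ) : IsGreatest (Jset f Δ) j := by
  refine ⟨hjJ, fun j' hj' => ?_⟩
  by_contra hcon
  have hbodd := an.bodd
  obtain ⟨hj1, hbj, hja⟩ := (Jset_mem h an).mp hjJ
  obtain ⟨hj'1, hbj', hja'⟩ := (Jset_mem h an).mp hj'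
  have hle : f j' ≤ f (j + 1) := h.mono (by omega) (by omega)
  have hle2 : f (j + 1) ≤ f j := h.mono hj1 (by omega)
  apply hnot
  exact (an.mem_iff _).mpr ⟨mult_pos h (by omega) (by omega), by omega, by omega⟩

lemma least_of_prev_notin {f : ℕ → ℕ} {m : ℕ} (h : PB f m) {Δ : Set ℕ}
    {a b : ℕ} (an : Anat f Δ a b) {j : ℕ} (hj1 : 1 ≤ j)
    (hjJ : j + 1 ∈ Jset f Δ) (hnot : f j ∉ Δ) : IsLeast (Jset f Δ) (j + 1) := by
  refine ⟨hjJ, fun j' hj' => ?_⟩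
  by_contra hcon
  have hbodd := an.bodd
  obtain ⟨_, hbj, hja⟩ := (Jset_mem h an).mp hjJ
  obtain ⟨hj'1, hbj', hja'⟩ := (Jset_mem h an).mp hj'
  have hle : f j ≤ f j' := h.mono hj'1 (by omega)
  have hle2 : f (j + 1) ≤ f j := h.mono hj1 (by omega)
  apply hnot
  exact (an.mem_iff _).mpr ⟨mult_pos h (by omega) (by omega), by omega, by omega⟩

lemma Jset_val_odd {f : ℕ → ℕ} {m : ℕ} (h : PB f m) (horth : Orth f)
    (hS : S f m % 2 = 0) (hspec : SpecialPairs f) {Δ : Set ℕ}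
    (hΔ : IsIntervalOE f Δ) {x : ℕ} (hx : x ∈ Δ) : x % 2 = 1 := by
  obtain ⟨a, b, an⟩ := interval_anatomy h horth hS hΔ
  exact an.val_odd h horth hspec hx

lemma g_pair_parity {f : ℕ → ℕ} {m : ℕ} (h : PB f m) (horth : Orth f)
    (hS : S f m % 2 = 0) (hspec : SpecialPairs f) {t : ℕ} (ht : 1 ≤ t) :
    gAdd f (2 * t) % 2 = gAdd f (2 * t + 1) % 2 := by
  set j := 2 * t with hjdef
  have hj1 : 1 ≤ j := by omega
  have gv1 := gval h horth hS j
  have gv2 := gval h horth hS (j + 1)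
  by_cases hpj : f j % 2 = 1 <;> by_cases hpj1 : f (j + 1) % 2 = 1
  · -- both odd
    obtain ⟨Δ, hΔ, hjJ⟩ := exists_interval_of_odd h hj1 hpj
    obtain ⟨Δ', hΔ', hj1J⟩ := exists_interval_of_odd h (by omega) hpj1
    by_cases hE : Δ = Δ'
    · subst hE
      obtain ⟨s, e, a, b, bl⟩ := blk_exists h horth hS hΔ
      have hsj : s ≤ j := bl.least.2 hjJ
      have hje : j + 1 ≤ e := bl.greatest.2 hj1J
      have hso := bl.sodd
      have hee := bl.eeven
      have hz1 : zetaOE f j = 0 :=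
        zeta_zero_of_interior h horth hS bl hjJ (by omega) (by omega)
      have hz2 : zetaOE f (j + 1) = 0 :=
        zeta_zero_of_interior h horth hS bl hj1J (by omega) (by omega)
      rw [hz1] at gv1
      rw [hz2] at gv2
      omega
    · have hd : f (j + 1) ∉ Δ := by
        intro hmem
        exact hE (interval_eq_of_Jmem h horth hS hΔ hΔ' ⟨by omega, hmem⟩ hj1J)
      have hd' : f j ∉ Δ' := by
        intro hmem
        exact hE (interval_eq_of_Jmem h horth hS hΔ hΔ' hjJ ⟨hj1, hmem⟩)
      obtain ⟨a, b, an⟩ := interval_anatomy h horth hS hΔ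
      obtain ⟨a', b', an'⟩ := interval_anatomy h horth hS hΔ'
      have hg : IsGreatest (Jset f Δ) j := greatest_of_next_notin h an hjJ hd
      have hl : IsLeast (Jset f Δ') (j + 1) := least_of_prev_notin h an' hj1 hj1J hd'
      have hz1 : zetaOE f j = -1 := zeta_greatest h horth hS hΔ hg
      have hz2 : zetaOE f (j + 1) = 1 := zeta_least hΔ' hl
      rw [hz1] at gv1
      rw [hz2] at gv2
      omega
  · -- f j odd, f (j+1) even
    have hp1' : f (j + 1) % 2 = 0 := by omega
    obtain ⟨Δ, hΔ, hjJ⟩ := exists_interval_of_odd h hj1 hpj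
    obtain ⟨a, b, an⟩ := interval_anatomy h horth hS hΔ
    have hd : f (j + 1) ∉ Δ := by
      intro hmem
      have := an.val_odd h horth hspec hmem
      omega
    have hg : IsGreatest (Jset f Δ) j := greatest_of_next_notin h an hjJ hd
    have hz1 : zetaOE f j = -1 := zeta_greatest h horth hS hΔ hg
    have hz2 : zetaOE f (j + 1) = 0 := zeta_zero_of_even h horth hS hp1'
    rw [hz1] at gv1
    rw [hz2] at gv2
    omega
  · -- f j even, f (j+1) odd
    have hp' : f j % 2 = 0 := by omega
    obtain ⟨Δ', hΔ', hj1J⟩ := exists_interval_of_odd h (by omega) hpj1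
    obtain ⟨a', b', an'⟩ := interval_anatomy h horth hS hΔ'
    have hd' : f j ∉ Δ' := by
      intro hmem
      have := an'.val_odd h horth hspec hmem
      omega
    have hl : IsLeast (Jset f Δ') (j + 1) := least_of_prev_notin h an' hj1 hj1J hd'
    have hz1 : zetaOE f j = 0 := zeta_zero_of_even h horth hS hp'
    have hz2 : zetaOE f (j + 1) = 1 := zeta_least hΔ' hl
    rw [hz1] at gv1
    rw [hz2] at gv2
    omega
  · have hz1 : zetaOE f j = 0 := zeta_zero_of_even h horth hS (by omega)
    have hz2 : zetaOE f (j + 1) = 0 := zeta_zero_of_even h horth hS (by omega)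
    rw [hz1] at gv1
    rw [hz2] at gv2
    omega

end AuxDev8

section AuxDev9

lemma PB.relax {x : ℕ → ℕ} {m m' : ℕ} (h : PB x m) (hmm : m ≤ m') : PB x m' :=
  ⟨h.mono, fun j hj => h.bnd j (by omega), le_trans h.pos hmm⟩

lemma transpose_eq_card {x : ℕ → ℕ} {m : ℕ} (h : PB x m) {j : ℕ} (hj : 1 ≤ j) :
    transpose x j = ((Finset.Icc 1 m).filter fun i => j ≤ x i).card := by
  rw [transpose, ← Set.ncard_coe_finset]
  congr 1
  ext i
  simp only [Set.mem_setOf_eq, Finset.coe_filter, Finset.mem_Icc]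
  constructor
  · rintro ⟨h1, _, h3⟩
    exact ⟨⟨h1, h.idx_le (by omega)⟩, h3⟩
  · rintro ⟨⟨h1, _⟩, h3⟩
    exact ⟨h1, hj, h3⟩

lemma transpose_zero (x : ℕ → ℕ) : transpose x 0 = 0 := by
  rw [transpose]
  convert Set.ncard_empty ℕ
  ext i
  simp

lemma transpose_PB {x : ℕ → ℕ} {m : ℕ} (h : PB x m) : PB (transpose x) (max (x 1) 1) := by
  refine ⟨?_, ?_, le_max_right _ _⟩
  · intro j k hj hjk
    rw [transpose_eq_card h hj, transpose_eq_card h (by omega : 1 ≤ k)]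
    apply Finset.card_le_card
    intro i hi
    simp only [Finset.mem_filter] at hi ⊢
    exact ⟨hi.1, by omega⟩
  · intro j hj
    rw [transpose_eq_card h (by omega : 1 ≤ j)]
    convert Finset.card_empty
    rw [Finset.filter_eq_empty_iff]
    intro i hi
    simp only [Finset.mem_Icc] at hi
    have := h.le_top hi.1
    omega

lemma transpose_ge_iff {x : ℕ → ℕ} {m : ℕ} (h : PB x m) {i j : ℕ} (hi : 1 ≤ i)
    (hj : 1 ≤ j) : i ≤ transpose x j ↔ j ≤ x i := by
  rw [transpose_eq_card h hj]
  constructor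
  · intro hc
    by_contra hcon
    have hsub : (Finset.Icc 1 m).filter (fun r => j ≤ x r) ⊆ Finset.Icc 1 (i - 1) := by
      intro r hr
      simp only [Finset.mem_filter, Finset.mem_Icc] at hr ⊢
      refine ⟨hr.1.1, ?_⟩
      by_contra hcon2
      have := h.mono hi (by omega : i ≤ r)
      omega
    have := Finset.card_le_card hsub
    rw [Nat.card_Icc] at this
    omega
  · intro hxi
    have hsub : Finset.Icc 1 i ⊆ (Finset.Icc 1 m).filter (fun r => j ≤ x r) := by
      intro r hr
      simp only [Finset.mem_Icc] at hr
      have h1 : x i ≤ x r := h.mono hr.1 hr.2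
      simp only [Finset.mem_filter, Finset.mem_Icc]
      exact ⟨⟨hr.1, h.idx_le (by omega)⟩, by omega⟩
    have := Finset.card_le_card hsub
    rw [Nat.card_Icc] at this
    omega

lemma transpose_transpose {x : ℕ → ℕ} {m : ℕ} (h : PB x m) {i : ℕ} (hi : 1 ≤ i) :
    transpose (transpose x) i = x i := by
  have hT := transpose_PB h
  rw [transpose_eq_card hT hi]
  have hset : (Finset.Icc 1 (max (x 1) 1)).filter (fun j => i ≤ transpose x j)
      = Finset.Icc 1 (x i) := by
    ext j
    simp only [Finset.mem_filter, Finset.mem_Icc]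
    constructor
    · rintro ⟨⟨hj1, _⟩, hj2⟩
      exact ⟨hj1, (transpose_ge_iff h hi hj1).mp hj2⟩
    · rintro ⟨hj1, hj2⟩
      have hxi : x i ≤ x 1 := h.le_top hi
      exact ⟨⟨hj1, by omega⟩, (transpose_ge_iff h hi hj1).mpr hj2⟩
  rw [hset, Nat.card_Icc]
  omega

lemma mult_transpose {x : ℕ → ℕ} {m : ℕ} (h : PB x m) {v : ℕ} (hv : 1 ≤ v) :
    mult (transpose x) v = x v - x (v + 1) := by
  have hT := transpose_PB h
  rw [mult_eq_card hT hv]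
  have hset : (Finset.Icc 1 (max (x 1) 1)).filter (fun j => transpose x j = v)
      = Finset.Ioc (x (v + 1)) (x v) := by
    ext j
    simp only [Finset.mem_filter, Finset.mem_Icc, Finset.mem_Ioc]
    constructor
    · rintro ⟨⟨hj1, _⟩, hj2⟩
      constructor
      · by_contra hcon
        have : j ≤ x (v + 1) := by omega
        have := (transpose_ge_iff h (by omega : 1 ≤ v + 1) hj1).mpr this
        omega
      · have : v ≤ transpose x j := by omega
        exact (transpose_ge_iff h hv hj1).mp this
    · rintro ⟨hj1, hj2⟩
      have hj1' : 1 ≤ j := by omega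
      have hle : v ≤ transpose x j := (transpose_ge_iff h hv hj1').mpr hj2
      have hlt : ¬ (v + 1 ≤ transpose x j) := by
        intro hcon
        have := (transpose_ge_iff h (by omega : 1 ≤ v + 1) hj1').mp hcon
        omega
      have hxv : x v ≤ x 1 := h.le_top hv
      exact ⟨⟨by omega, by omega⟩, by omega⟩
  rw [hset, Nat.card_Ioc]

lemma S_transpose {x : ℕ → ℕ} {m : ℕ} (h : PB x m) (k : ℕ) :
    S (transpose x) k = ∑ i ∈ Finset.Icc 1 m, min (x i) k := by
  rw [S]
  have h1 : ∀ j ∈ Finset.Icc 1 k, transpose x j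
      = ∑ i ∈ Finset.Icc 1 m, if j ≤ x i then 1 else 0 := by
    intro j hj
    rw [transpose_eq_card h (Finset.mem_Icc.mp hj).1, Finset.card_filter]
  rw [Finset.sum_congr rfl h1, Finset.sum_comm]
  apply Finset.sum_congr rfl
  intro i _
  have h2 : (Finset.Icc 1 k).filter (fun j => j ≤ x i) = Finset.Icc 1 (min (x i) k) := by
    ext j
    simp only [Finset.mem_filter, Finset.mem_Icc]
    omega
  rw [← Finset.card_filter, h2, Nat.card_Icc]
  omega

lemma dc_seg {s : Finset ℕ} {M : ℕ} (hsub : s ⊆ Finset.Icc 1 M)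
    (hdc : ∀ j ∈ s, ∀ j', 1 ≤ j' → j' ≤ j → j' ∈ s) : s = Finset.Icc 1 s.card := by
  rcases s.eq_empty_or_nonempty with he | hne
  · rw [he]
    simp
  · have hmax := s.max'_mem hne
    have hseq : s = Finset.Icc 1 (s.max' hne) := by
      ext j
      simp only [Finset.mem_Icc]
      constructor
      · intro hj
        have h1 := hsub hj
        simp only [Finset.mem_Icc] at h1
        exact ⟨h1.1, s.le_max' j hj⟩
      · rintro ⟨hj1, hj2⟩
        exact hdc _ hmax j hj1 hj2
    have hcard : s.card = s.max' hne := by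
      conv_lhs => rw [hseq]
      rw [Nat.card_Icc]
      omega
    rw [hcard]
    exact hseq

lemma sum_max_eq {x : ℕ → ℕ} {m M : ℕ} (h : PB x m) (hM : m ≤ M) (k : ℕ) :
    ∑ i ∈ Finset.Icc 1 M, max ((x i : ℤ) - k) 0
      = (S x (((Finset.Icc 1 M).filter fun i => k < x i).card) : ℤ)
        - (((Finset.Icc 1 M).filter fun i => k < x i).card : ℤ) * k := by
  set s := (Finset.Icc 1 M).filter fun i => k < x i with hs
  have hseq : s = Finset.Icc 1 s.card := by
    apply dc_seg (Finset.filter_subset _ _)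
    intro j hj j' hj'1 hj'le
    simp only [hs, Finset.mem_filter, Finset.mem_Icc] at hj ⊢
    have := h.mono hj'1 hj'le
    exact ⟨⟨hj'1, by omega⟩, by omega⟩
  have hsplit : ∑ i ∈ Finset.Icc 1 M, max ((x i : ℤ) - k) 0
      = ∑ i ∈ s, ((x i : ℤ) - k) := by
    rw [Finset.sum_filter]
    apply Finset.sum_congr rfl
    intro i _
    split_ifs with hcond
    · omega
    · omega
  rw [hsplit]
  conv_lhs => rw [hseq]
  have h3 : ∑ i ∈ Finset.Icc 1 s.card, ((x i : ℤ) - k)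
      = (∑ i ∈ Finset.Icc 1 s.card, (x i : ℤ)) - (s.card : ℤ) * k := by
    rw [Finset.sum_sub_distrib, Finset.sum_const, Nat.card_Icc, nsmul_eq_mul]
    push_cast
    ring
  have h4 : (S x s.card : ℤ) = ∑ i ∈ Finset.Icc 1 s.card, (x i : ℤ) := by
    rw [S]
    push_cast
    rfl
  rw [h3, h4]

lemma sum_min_cast {x : ℕ → ℕ} (M k : ℕ) :
    (↑(∑ i ∈ Finset.Icc 1 M, min (x i) k) : ℤ)
      = ∑ i ∈ Finset.Icc 1 M, ((x i : ℤ) - max ((x i : ℤ) - k) 0) := by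
  push_cast
  apply Finset.sum_congr rfl
  intro i _
  rcases le_total ((x i : ℤ)) ((k : ℤ)) with hc | hc
  · rw [min_eq_left hc, max_eq_right (by omega : (x i : ℤ) - k ≤ 0)]
    omega
  · rw [min_eq_right hc, max_eq_left (by omega : (0:ℤ) ≤ (x i : ℤ) - k)]
    omega

lemma Dom_transpose {x y : ℕ → ℕ} {mx my N : ℕ} (hx : PB x mx) (hy : PB y my)
    (hNx : S x mx = N) (hNy : S y my = N) (hdom : Dom x y) :
    Dom (transpose y) (transpose x) := by
  intro k
  set M := max mx my with hM
  have hx' : PB x M := hx.relax (le_max_left _ _)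
  have hy' : PB y M := hy.relax (le_max_right _ _)
  rw [S_transpose hx' k, S_transpose hy' k]
  have hNxM : S x M = N := by rw [S_stable x (le_max_left _ _) hx.bnd]; exact hNx
  have hNyM : S y M = N := by rw [S_stable y (le_max_right _ _) hy.bnd]; exact hNy
  -- compare via the ℤ identities
  have hxi := sum_min_cast (x := x) M k
  have hyi := sum_min_cast (x := y) M k
  set rx := ((Finset.Icc 1 M).filter fun i => k < x i).card with hrx
  have hxmax := sum_max_eq hx' le_rfl k
  rw [← hrx] at hxmax
  -- lower bound for the y-side truncated sum
  have hylow : (S y rx : ℤ) - (rx : ℤ) * k ≤ ∑ i ∈ Finset.Icc 1 M, max ((y i : ℤ) - k) 0 := by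
    have hrxM : rx ≤ M := by
      rw [hrx]
      calc ((Finset.Icc 1 M).filter fun i => k < x i).card
          ≤ (Finset.Icc 1 M).card := Finset.card_le_card (Finset.filter_subset _ _)
        _ = M := by rw [Nat.card_Icc]; omega
    have h1 : (S y rx : ℤ) - (rx : ℤ) * k = ∑ i ∈ Finset.Icc 1 rx, ((y i : ℤ) - k) := by
      rw [Finset.sum_sub_distrib, Finset.sum_const, Nat.card_Icc, nsmul_eq_mul, S]
      push_cast
      ring
    rw [h1]
    calc ∑ i ∈ Finset.Icc 1 rx, ((y i : ℤ) - k)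
        ≤ ∑ i ∈ Finset.Icc 1 rx, max ((y i : ℤ) - k) 0 := by
          apply Finset.sum_le_sum
          intro i _
          exact le_max_left _ _
      _ ≤ ∑ i ∈ Finset.Icc 1 M, max ((y i : ℤ) - k) 0 := by
          apply Finset.sum_le_sum_of_subset_of_nonneg
          · intro i hi
            simp only [Finset.mem_Icc] at hi ⊢
            omega
          · intro i _ _
            exact le_max_right _ _
  have hdomrx := hdom rx
  -- conclude
  have hxsum : (∑ i ∈ Finset.Icc 1 M, (x i : ℤ)) = (N : ℤ) := by
    rw [← hNxM, S]
    push_cast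
    rfl
  have hysum : (∑ i ∈ Finset.Icc 1 M, (y i : ℤ)) = (N : ℤ) := by
    rw [← hNyM, S]
    push_cast
    rfl
  have hfinal : (↑(∑ i ∈ Finset.Icc 1 M, min (y i) k) : ℤ)
      ≤ (↑(∑ i ∈ Finset.Icc 1 M, min (x i) k) : ℤ) := by
    rw [hxi, hyi, Finset.sum_sub_distrib, Finset.sum_sub_distrib, hxsum, hysum]
    have : (S x rx : ℤ) ≤ (S y rx : ℤ) := by exact_mod_cast hdomrx
    omega
  exact_mod_cast hfinal

end AuxDev9

section AuxDev10

lemma main_strict {f L : ℕ → ℕ} {m mL : ℕ} (h : PB f m) (horth : Orth f)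
    (hS : S f m % 2 = 0) (hspec : SpecialPairs f) (hL : PB L mL)
    (hLp : ∀ t, 1 ≤ t → L (2 * t) % 2 = L (2 * t + 1) % 2)
    (htot : S f m = S L mL) (hdom : Dom f L) {r : ℕ} (hopen : OpenAt f m r) :
    S f r < S L r := by
  obtain ⟨Δ, s, e, a, b, bl, hsr, hre⟩ := hopen
  by_contra hcon
  have heq : S f r = S L r := le_antisymm (hdom r) (by omega)
  have hs1 : 1 ≤ s := ((Jset_mem h bl.an).mp bl.least.1).1
  have hetop := bl.etop
  have hsodd := bl.sodd
  have heeven := bl.eeven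
  set W := max m mL with hW
  set M := 2 * W + 1 with hM
  have hmM : m ≤ M := by omega
  have hmLM : mL ≤ M := by omega
  have hrM : r ≤ M := by omega
  -- tail sums are equal
  have hfM : S f M = S L M := by
    rw [S_stable f hmM h.bnd, S_stable L hmLM hL.bnd]
    exact htot
  have hsplitf := S_split f hrM
  have hsplitL := S_split L hrM
  have hTail : ∑ j ∈ Finset.Ioc r M, f j = ∑ j ∈ Finset.Ioc r M, L j := by omega
  -- parity of the f-side tail
  have hfodd : ∀ j ∈ Finset.Ioc r e, Odd (f j) := by
    intro j hj
    rw [Finset.mem_Ioc] at hj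
    exact Nat.odd_iff.mpr (bl.fodd h horth hspec (by omega) hj.2)
  have hfe1 : (∑ j ∈ Finset.Ioc r e, f j) % 2 = (e - r) % 2 := by
    have h1 := sum_parity_card f (Finset.Ioc r e)
    rw [Finset.filter_true_of_mem hfodd, Nat.card_Ioc] at h1
    exact h1
  have hfe2 : (∑ j ∈ Finset.Ioc e M, f j) % 2 = 0 := by
    have hsplit2 : ∑ j ∈ Finset.Ioc e M, f j
        = (∑ j ∈ Finset.Ioc e (2 * W), f j) + f M := by
      rw [hM]
      exact Finset.sum_Ioc_succ_top (by omega) f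
    have hfM0 : f M = 0 := h.bnd M (by omega)
    have hp := pairs_sum_even f hspec (show e / 2 ≤ W by omega)
    rw [show 2 * (e / 2) = e by omega] at hp
    omega
  have hftail : (∑ j ∈ Finset.Ioc r M, f j) % 2 = (e - r) % 2 := by
    have := Finset.sum_Ioc_consecutive f (show r ≤ e by omega) (show e ≤ M by omega)
    omega
  rcases Nat.even_or_odd r with hreven | hrodd
  · -- r even
    have hr2 : r % 2 = 0 := Nat.even_iff.mp hreven
    have hr2' : 2 ≤ r := by omega
    have hLsplit : ∑ j ∈ Finset.Ioc r M, L j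
        = L (r + 1) + ∑ j ∈ Finset.Ioc (r + 1) M, L j := sum_Ioc_bot L (by omega)
    have hLtail : (∑ j ∈ Finset.Ioc (r + 1) M, L j) % 2 = 0 := by
      have hp := pairs_sum_even' L hLp (show r / 2 ≤ W by omega)
      rw [show 2 * (r / 2) + 1 = r + 1 by omega] at hp
      exact hp
    have hLr1even : L (r + 1) % 2 = 0 := by omega
    -- dominance squeeze at r
    have hup := hdom (r + 1)
    rw [S_succ, S_succ] at hup
    have hfLr1 : f (r + 1) ≤ L (r + 1) := by omega
    have hdown := hdom (r - 1)
    have eSf : S f r = S f (r - 1) + f r := by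
      have := S_succ f (r - 1)
      rw [show r - 1 + 1 = r by omega] at this
      exact this
    have eSL : S L r = S L (r - 1) + L r := by
      have := S_succ L (r - 1)
      rw [show r - 1 + 1 = r by omega] at this
      exact this
    have hLrfr : L r ≤ f r := by omega
    have hLmono : L (r + 1) ≤ L r := hL.mono (by omega) (by omega)
    have hfr1odd : f (r + 1) % 2 = 1 :=
      bl.fodd h horth hspec (show s ≤ r + 1 by omega) (show r + 1 ≤ e by omega)
    by_cases hfr : f r = f (r + 1)
    · omega
    · -- f r > f (r+1): count indices with value > f (r+1)
      have hmono1 : f (r + 1) ≤ f r := h.mono (by omega) (by omega)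
      have hrJ := (Jset_mem h bl.an).mp ((bl.J_iff h).mpr ⟨hsr, by omega⟩)
      have hr1J := (Jset_mem h bl.an).mp
        ((bl.J_iff h).mpr ⟨show s ≤ r + 1 by omega, show r + 1 ≤ e by omega⟩)
      have hset : (Finset.Icc 1 m).filter (fun j => f (r + 1) + 1 ≤ f j)
          = Finset.Icc 1 r := by
        ext j
        simp only [Finset.mem_filter, Finset.mem_Icc]
        constructor
        · rintro ⟨⟨hj1, hjm⟩, hfj⟩
          refine ⟨hj1, ?_⟩
          by_contra hcon2
          have : f j ≤ f (r + 1) := h.mono (by omega) (by omega)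
          omega
        · rintro ⟨hj1, hjr⟩
          have : f r ≤ f j := h.mono hj1 hjr
          exact ⟨⟨hj1, by omega⟩, by omega⟩
      have hcard : ((Finset.Icc 1 m).filter fun j => f (r + 1) + 1 ≤ f j).card = r := by
        rw [hset, Nat.card_Icc]
        omega
      have hpar := Ncard_parity h (v := f (r + 1) + 1) (by omega)
      have hodd := bl.an.cnt_ge_odd (v := f (r + 1) + 1)
        (by omega : b < f (r + 1) + 1) (by omega : f (r + 1) + 1 ≤ a)
      omega
  · -- r odd : direct parity contradiction
    have hr2 : r % 2 = 1 := Nat.odd_iff.mp hrodd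
    have hLtail : (∑ j ∈ Finset.Ioc r M, L j) % 2 = 0 := by
      have hp := pairs_sum_even' L hLp (show r / 2 ≤ W by omega)
      rw [show 2 * (r / 2) + 1 = r by omega] at hp
      exact hp
    omega

lemma main_dom {f L : ℕ → ℕ} {m mL : ℕ} (h : PB f m) (horth : Orth f)
    (hS : S f m % 2 = 0) (hspec : SpecialPairs f) (hL : PB L mL)
    (hLp : ∀ t, 1 ≤ t → L (2 * t) % 2 = L (2 * t + 1) % 2)
    (htot : S f m = S L mL) (hdom : Dom f L) : Dom (gAdd f) L := by
  intro r
  have h1 := S_gAdd h horth hS r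
  rw [Sz_zeta h horth hS r] at h1
  by_cases ho : OpenAt f m r
  · rw [if_pos ho] at h1
    have := main_strict h horth hS hspec hL hLp htot hdom ho
    omega
  · rw [if_neg ho] at h1
    have := hdom r
    omega

end AuxDev10

section AuxDev11

lemma S_congr {x y : ℕ → ℕ} (hxy : ∀ j, 1 ≤ j → x j = y j) (k : ℕ) :
    S x k = S y k := by
  apply Finset.sum_congr rfl
  intro j hj
  exact hxy j (Finset.mem_Icc.mp hj).1

lemma mult_congr {x y : ℕ → ℕ} (hxy : ∀ j, 1 ≤ j → x j = y j) (v : ℕ) :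
    mult x v = mult y v := by
  unfold mult
  congr 1
  ext j
  simp only [Set.mem_setOf_eq]
  constructor
  · rintro ⟨h1, h2⟩
    exact ⟨h1, by rw [← hxy j h1]; exact h2⟩
  · rintro ⟨h1, h2⟩
    exact ⟨h1, by rw [hxy j h1]; exact h2⟩

lemma transpose_partition {x : ℕ → ℕ} {m N : ℕ} (h : PB x m) (hN : S x m = N) :
    IsPartition (transpose x) N := by
  refine ⟨(transpose_PB h).mono, ⟨max (x 1) 1, (transpose_PB h).bnd⟩, ?_⟩
  intro m' hm'
  have h1 : S (transpose x) (max m' (x 1)) = S (transpose x) m' :=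
    S_stable _ (le_max_left _ _) hm'
  have h2 := S_transpose h (max m' (x 1))
  have h3 : ∑ i ∈ Finset.Icc 1 m, min (x i) (max m' (x 1))
      = ∑ i ∈ Finset.Icc 1 m, x i := by
    apply Finset.sum_congr rfl
    intro i hi
    have hxi : x i ≤ x 1 := h.le_top (Finset.mem_Icc.mp hi).1
    exact min_eq_left (le_trans hxi (le_max_right _ _))
  have h4 : S x m = ∑ i ∈ Finset.Icc 1 m, x i := rfl
  omega

end AuxDev11

/-- Lemma 1.7: for a special orthogonal partition `λ` of `2n`, `^t(λ + ζ(λ))` is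
the greatest orthogonal partition of `2n` dominated by `^tλ`. -/
theorem stmt1 (n : ℕ) (hn : 1 ≤ n) (f : ℕ → ℕ)
    (hpart : IsPartition f (2*n)) (horth : Orth f) (hspec : SpecialPairs f) :
    ∃ g : ℕ → ℕ,
      (∀ j, 1 ≤ j → (g j : ℤ) = (f j : ℤ) + zetaOE f j) ∧
      IsPartition g (2*n) ∧
      (IsPartition (transpose g) (2*n) ∧ Orth (transpose g) ∧
        Dom (transpose g) (transpose f)) ∧
      (∀ μ : ℕ → ℕ, IsPartition μ (2*n) → Orth μ → Dom μ (transpose f) →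
        Dom μ (transpose g)) := by
  obtain ⟨m, h⟩ := hpart.pb
  have hfN : S f m = 2 * n := hpart.total m h.bnd
  have hS : S f m % 2 = 0 := by omega
  have hg : PB (gAdd f) m := gAdd_PB h horth hS
  have hgN : S (gAdd f) m = 2 * n := by
    rw [S_gAdd_top h horth hS le_rfl]
    exact hfN
  refine ⟨gAdd f, fun j _ => gval h horth hS j, gAdd_partition h horth hS hfN,
    ⟨transpose_partition hg hgN, ?_, ?_⟩, ?_⟩
  · -- orthogonality of the transpose
    intro i hieven hi1
    have hig : 2 * (i / 2) = i := by
      rcases hieven with ⟨t, ht⟩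
      omega
    have hpar := g_pair_parity h horth hS hspec (t := i / 2) (by omega)
    rw [hig] at hpar
    have hle : gAdd f (i + 1) ≤ gAdd f i := hg.mono hi1 (by omega)
    rw [mult_transpose hg hi1, Nat.even_iff]
    omega
  · -- dominance
    exact Dom_transpose h hg hfN hgN (Dom_f_gAdd h horth hS)
  · -- maximality
    intro μ hμpart hμorth hμdom
    obtain ⟨mμ, hμ⟩ := hμpart.pb
    have hμN : S μ mμ = 2 * n := hμpart.total _ hμ.bnd
    have hL : PB (transpose μ) (max (μ 1) 1) := transpose_PB hμ
    have hLN : S (transpose μ) (max (μ 1) 1) = 2 * n :=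
      (transpose_partition hμ hμN).total _ hL.bnd
    have hTf : PB (transpose f) (max (f 1) 1) := transpose_PB h
    have hTfN : S (transpose f) (max (f 1) 1) = 2 * n :=
      (transpose_partition h hfN).total _ hTf.bnd
    -- the transpose of μ has the dual parity property
    have hLp : ∀ t, 1 ≤ t → transpose μ (2 * t) % 2 = transpose μ (2 * t + 1) % 2 := by
      intro t ht
      have h1 : Even (mult μ (2 * t)) := hμorth (2 * t) (by exact ⟨t, by omega⟩) (by omega)
      have h2 : mult μ (2 * t) = mult (transpose (transpose μ)) (2 * t) :=
        mult_congr (fun j hj => (transpose_transpose hμ hj).symm) _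
      have h3 : mult (transpose (transpose μ)) (2 * t)
          = transpose μ (2 * t) - transpose μ (2 * t + 1) := mult_transpose hL (by omega)
      have h4 : transpose μ (2 * t + 1) ≤ transpose μ (2 * t) := hL.mono (by omega) (by omega)
      rw [h2, h3, Nat.even_iff] at h1
      omega
    -- convert the hypothesis `Dom μ (transpose f)` to `Dom f (transpose μ)`
    have hdomfL : Dom f (transpose μ) := by
      have h1 : Dom (transpose (transpose f)) (transpose μ) :=
        Dom_transpose hμ hTf hμN hTfN hμdom
      intro k
      have h2 : S f k = S (transpose (transpose f)) k :=
        S_congr (fun j hj => (transpose_transpose h hj).symm) k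
      rw [h2]
      exact h1 k
    have hmain : Dom (gAdd f) (transpose μ) :=
      main_dom h horth hS hspec hL hLp (by omega) hdomfL
    have hfinal : Dom (transpose (transpose μ)) (transpose (gAdd f)) :=
      Dom_transpose hg hL hgN hLN hmain
    intro k
    have h2 : S μ k = S (transpose (transpose μ)) k :=
      S_congr (fun j hj => (transpose_transpose hμ hj).symm) k
    rw [h2]
    exact hfinal k

end Wald
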